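/- arXiv:1505.04132 — 6 statements merged into one kernel-verified Lean document; each statement's English description precedes it below -/
import Mathlib

section
/- For every m > 0 and s ∈ (0,1), the absolute value of the integral term satisfies |∫_{-1}^{1} t ∫_0^∞ p^s/(p^2+1+(2/(m+1))tp) dp dt| ≤ (4/m) ∫_0^∞ p^{s+1}/(p^2+1)^2 dp. -/
open MeasureTheory intervalIntegral Real

private lemma intAux (a : ℝ) (k : ℕ) (ha : 0 < a) (h : a - 2*(k:ℝ) < -1) :
    MeasureTheory.IntegrableOn (fun p : ℝ => p ^ a / (p^2+1)^k) (Set.Ioi (0:ℝ)) := by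
  have hcont : Continuous fun p : ℝ => p ^ a / (p^2+1)^k := by
    apply Continuous.div
    · exact continuous_iff_continuousAt.2 fun x => Real.continuousAt_rpow_const x a (Or.inr ha.le)
    · fun_prop
    · intro p; positivity
  rw [show Set.Ioi (0:ℝ) = Set.Ioc 0 1 ∪ Set.Ioi 1 from (Set.Ioc_union_Ioi_eq_Ioi (by norm_num)).symm]
  apply MeasureTheory.IntegrableOn.union
  · exact (hcont.continuousOn.integrableOn_compact isCompact_Icc).mono_set Set.Ioc_subset_Icc_self
  · apply MeasureTheory.Integrable.mono (integrableOn_Ioi_rpow_of_lt h one_pos)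
      hcont.aestronglyMeasurable
    filter_upwards [MeasureTheory.ae_restrict_mem measurableSet_Ioi] with p hp
    have hp1 : (1:ℝ) < p := hp
    have hp0 : (0:ℝ) < p := by linarith
    rw [Real.norm_eq_abs, Real.norm_eq_abs, abs_of_nonneg (by positivity),
      abs_of_nonneg (by positivity)]
    have e2 : p ^ (2*(k:ℝ)) = (p^2)^k := by
      rw [show (2*(k:ℝ)) = ((2*k : ℕ) : ℝ) by push_cast; ring, Real.rpow_natCast, pow_mul]
    have e : p ^ (a - 2*(k:ℝ)) = p ^ a / (p^2)^k := by
      rw [Real.rpow_sub hp0, e2]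
    rw [e]
    apply div_le_div_of_nonneg_left (by positivity) (by positivity)
    gcongr
    nlinarith

theorem stmt7 (m s : ℝ) (hm : 0 < m) (hs0 : 0 < s) (hs1 : s < 1) :
    |∫ t in (-1 : ℝ)..1,
        t * ∫ p in Set.Ioi (0 : ℝ), p ^ s / (p ^ 2 + 1 + (2 / (m + 1)) * t * p)| ≤
      (4 / m) * ∫ p in Set.Ioi (0 : ℝ), p ^ (s + 1) / (p ^ 2 + 1) ^ 2 := by
  have hm1 : (0:ℝ) < m + 1 := by linarith
  set c : ℝ := 2 / (m + 1) with hc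
  have hc0 : 0 < c := by positivity
  set I : ℝ := ∫ p in Set.Ioi (0 : ℝ), p ^ (s + 1) / (p ^ 2 + 1) ^ 2 with hIdef
  have hIint : MeasureTheory.IntegrableOn (fun p : ℝ => p ^ (s+1) / (p^2+1)^2)
      (Set.Ioi (0:ℝ)) := by
    have := intAux (s+1) 2 (by linarith) (by push_cast; linarith)
    simpa using this
  have hBint : MeasureTheory.IntegrableOn (fun p : ℝ => p ^ s / (p^2+1)) (Set.Ioi (0:ℝ)) := by
    have := intAux s 1 hs0 (by push_cast; linarith)
    simpa using this
  have hI0 : 0 ≤ I := by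
    apply MeasureTheory.setIntegral_nonneg measurableSet_Ioi
    intro p hp
    have hp0 : (0:ℝ) < p := hp
    positivity
  -- key denominator bound
  have hden : ∀ t p : ℝ, |t| ≤ 1 → 0 < p →
      m / (m+1) * (p^2+1) ≤ p^2 + 1 + c * t * p := by
    intro t p ht hp
    have h1 : -1 ≤ t := neg_le_of_abs_le ht
    have h2 : -(c * p) ≤ c * t * p := by nlinarith [mul_pos hc0 hp]
    have h3 : m / (m+1) * (p^2+1) ≤ p^2 + 1 - c * p := by
      rw [hc, div_mul_eq_mul_div, div_le_iff₀ hm1]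
      have : 2/(m+1) * p * (m+1) = 2 * p := by field_simp
      nlinarith [sq_nonneg (p-1)]
    linarith
  -- integrability of f t
  have hft : ∀ t : ℝ, |t| ≤ 1 →
      MeasureTheory.IntegrableOn (fun p : ℝ => p^s/(p^2+1+c*t*p)) (Set.Ioi (0:ℝ)) := by
    intro t ht
    apply MeasureTheory.Integrable.mono (hBint.const_mul ((m+1)/m))
    · apply ContinuousOn.aestronglyMeasurable _ measurableSet_Ioi
      apply ContinuousOn.div
      · exact (continuous_iff_continuousAt.2 fun x =>
          Real.continuousAt_rpow_const x s (Or.inr hs0.le)).continuousOn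
      · fun_prop
      · intro p hp
        have h0 : 0 < m/(m+1)*((p:ℝ)^2+1) := mul_pos (div_pos hm hm1) (by positivity)
        have := hden t p ht hp
        linarith
    · filter_upwards [MeasureTheory.ae_restrict_mem measurableSet_Ioi] with p hp
      have hp0 : (0:ℝ) < p := hp
      have hA : (0:ℝ) < p^2+1 := by positivity
      have hD := hden t p ht hp0
      have hDpos : 0 < p^2+1+c*t*p := lt_of_lt_of_le (by positivity) hD
      rw [Real.norm_eq_abs, Real.norm_eq_abs, abs_of_nonneg (by positivity),
        abs_of_nonneg (by positivity)]
      have e : (m+1)/m * (p^s/(p^2+1)) = p^s / (m/(m+1)*(p^2+1)) := by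
        field_simp
      rw [e]
      exact div_le_div_of_nonneg_left (by positivity)
        (mul_pos (div_pos hm hm1) (by positivity)) hD
  -- pointwise bound on the difference
  have hdiff_bound : ∀ t : ℝ, |t| ≤ 1 → ∀ p : ℝ, 0 < p →
      |p^s/(p^2+1+c*t*p) - p^s/(p^2+1)| ≤ 2/m * |t| * (p^(s+1)/(p^2+1)^2) := by
    intro t ht p hp
    have hA : (0:ℝ) < p^2+1 := by positivity
    have hD := hden t p ht hp
    have hDpos : 0 < p^2+1+c*t*p := lt_of_lt_of_le (by positivity) hD
    have hps1 : p^(s+1) = p^s * p := by rw [Real.rpow_add hp, Real.rpow_one]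
    have e1 : p^s/(p^2+1+c*t*p) - p^s/(p^2+1)
        = -(c*t*p^(s+1))/((p^2+1+c*t*p)*(p^2+1)) := by
      rw [hps1]
      rw [div_sub_div _ _ hDpos.ne' hA.ne', div_eq_div_iff (mul_ne_zero hDpos.ne' hA.ne') (mul_ne_zero hDpos.ne' hA.ne')]
      ring
    rw [e1, abs_div, abs_neg, abs_mul, abs_mul, abs_of_pos hc0,
      abs_of_pos (Real.rpow_pos_of_pos hp (s+1)), abs_of_pos (mul_pos hDpos hA)]
    calc c * |t| * p^(s+1)/((p^2+1+c*t*p)*(p^2+1))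
        ≤ c * |t| * p^(s+1)/((m/(m+1)*(p^2+1))*(p^2+1)) := by
          apply div_le_div_of_nonneg_left (by positivity)
            (mul_pos (mul_pos (div_pos hm hm1) hA) hA)
          exact mul_le_mul_of_nonneg_right hD hA.le
      _ = 2/m * |t| * (p^(s+1)/(p^2+1)^2) := by
          rw [hc]
          field_simp
  -- bound on inner difference integral
  have hGbound : ∀ t : ℝ, |t| ≤ 1 →
      |∫ p in Set.Ioi (0:ℝ), (p^s/(p^2+1+c*t*p) - p^s/(p^2+1))| ≤ 2/m * |t| * I := by
    intro t ht
    have hg : MeasureTheory.IntegrableOn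
        (fun p : ℝ => 2/m * |t| * (p^(s+1)/(p^2+1)^2)) (Set.Ioi (0:ℝ)) :=
      hIint.const_mul _
    have hb : ‖∫ p in Set.Ioi (0:ℝ), (p^s/(p^2+1+c*t*p) - p^s/(p^2+1))‖
        ≤ ∫ p in Set.Ioi (0:ℝ), 2/m * |t| * (p^(s+1)/(p^2+1)^2) := by
      apply MeasureTheory.norm_integral_le_of_norm_le hg
      filter_upwards [MeasureTheory.ae_restrict_mem measurableSet_Ioi] with p hp
      rw [Real.norm_eq_abs]
      exact hdiff_bound t ht p hp
    rw [MeasureTheory.integral_const_mul] at hb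
    rwa [Real.norm_eq_abs] at hb
  -- measurability of the difference integral in t
  have hGmeas : MeasureTheory.StronglyMeasurable
      (fun t : ℝ => ∫ p in Set.Ioi (0:ℝ), (p^s/(p^2+1+c*t*p) - p^s/(p^2+1))) := by
    have hm2 : MeasureTheory.StronglyMeasurable
        (fun q : ℝ × ℝ => q.2^s/(q.2^2+1+c*q.1*q.2) - q.2^s/(q.2^2+1)) := by
      apply Measurable.stronglyMeasurable
      fun_prop
    exact hm2.integral_prod_right'
  -- uniform bound on G over uIoc
  have hGb2 : ∀ t ∈ Set.uIoc (-1:ℝ) 1,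
      ‖t * ∫ p in Set.Ioi (0:ℝ), (p^s/(p^2+1+c*t*p) - p^s/(p^2+1))‖ ≤ 2/m * I := by
    intro t ht
    rw [Set.uIoc_of_le (by norm_num : (-1:ℝ) ≤ 1)] at ht
    have ht' : |t| ≤ 1 := abs_le.2 ⟨ht.1.le, ht.2⟩
    rw [Real.norm_eq_abs, abs_mul]
    have h1 := hGbound t ht'
    have h2 : 2/m * |t| * I ≤ 2/m * 1 * I := by
      have : (0:ℝ) ≤ 2/m := by positivity
      gcongr
    have h3 : |t| * |∫ p in Set.Ioi (0:ℝ), (p^s/(p^2+1+c*t*p) - p^s/(p^2+1))|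
        ≤ 1 * (2/m * 1 * I) :=
      mul_le_mul ht' (h1.trans h2) (abs_nonneg _) zero_le_one
    linarith
  have hG : IntervalIntegrable
      (fun t : ℝ => t * ∫ p in Set.Ioi (0:ℝ), (p^s/(p^2+1+c*t*p) - p^s/(p^2+1)))
      MeasureTheory.volume (-1) 1 := by
    rw [intervalIntegrable_iff]
    haveI : IsFiniteMeasure (MeasureTheory.volume.restrict (Set.uIoc (-1:ℝ) 1)) :=
      ⟨by rw [MeasureTheory.Measure.restrict_apply_univ]
          exact measure_Ioc_lt_top⟩
    apply MeasureTheory.Integrable.mono' (MeasureTheory.integrable_const (2/m * I))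
    · exact (measurable_id.mul hGmeas.measurable).aestronglyMeasurable
    · filter_upwards [MeasureTheory.ae_restrict_mem measurableSet_uIoc] with t ht
      exact hGb2 t ht
  have hlin : IntervalIntegrable
      (fun t : ℝ => t * ∫ p in Set.Ioi (0:ℝ), p^s/(p^2+1)) MeasureTheory.volume (-1) 1 :=
    (continuous_id.mul continuous_const).intervalIntegrable _ _
  have key : Set.EqOn
      (fun t : ℝ => t * ∫ p in Set.Ioi (0 : ℝ), p ^ s / (p ^ 2 + 1 + c * t * p))
      (fun t : ℝ => (t * ∫ p in Set.Ioi (0:ℝ), (p^s/(p^2+1+c*t*p) - p^s/(p^2+1)))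
        + t * ∫ p in Set.Ioi (0:ℝ), p^s/(p^2+1))
      (Set.uIcc (-1:ℝ) 1) := by
    intro t ht
    rw [Set.uIcc_of_le (by norm_num : (-1:ℝ) ≤ 1)] at ht
    have ht' : |t| ≤ 1 := abs_le.2 ⟨ht.1, ht.2⟩
    simp only
    rw [MeasureTheory.integral_sub (hft t ht') hBint]
    ring
  rw [integral_congr key, integral_add hG hlin]
  have hzero : (∫ t in (-1:ℝ)..1, t * ∫ p in Set.Ioi (0:ℝ), p^s/(p^2+1)) = 0 := by
    rw [intervalIntegral.integral_mul_const, integral_id]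
    norm_num
  rw [hzero, add_zero]
  have hfinal := norm_integral_le_of_norm_le_const hGb2
  rw [Real.norm_eq_abs] at hfinal
  have : (2/m * I) * |1 - (-1 : ℝ)| = 4/m * I := by
    rw [show |1 - (-1:ℝ)| = 2 by norm_num]
    ring
  rw [this] at hfinal
  calc _ ≤ 4/m * I := hfinal
    _ = (4/m) * I := by ring
end

section
/- Let m > 0 and 0 < s < 1 satisfy the resonance equation π √(m(m+2))/(m+1) + ∫_{-1}^{1} t ∫_0^∞ p^s/(p^2+1+(2/(m+1))tp) dp dt = 0. Then for every p > 0, 2π² √(m(m+2))/(m+1) · p^{s−1} + 2π ∫_{-1}^{1} t ∫_0^∞ q^s/(q^2 + p^2 + (2/(m+1)) t p q) dq dt = 0. -/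
open MeasureTheory intervalIntegral Real

lemma inner_scale (s : ℝ) (c p : ℝ) (hp : 0 < p) :
    (∫ q in Set.Ioi (0 : ℝ), q ^ s / (q ^ 2 + p ^ 2 + c * p * q))
      = p ^ (s - 1) *
        ∫ q in Set.Ioi (0 : ℝ), q ^ s / (q ^ 2 + 1 + c * q) := by
  have h := MeasureTheory.integral_comp_mul_left_Ioi
    (fun q : ℝ => q ^ s / (q ^ 2 + p ^ 2 + c * p * q)) 0 hp
  rw [mul_zero] at h
  have key : (∫ x in Set.Ioi (0 : ℝ),
      (fun q : ℝ => q ^ s / (q ^ 2 + p ^ 2 + c * p * q)) (p * x))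
      = ∫ x in Set.Ioi (0 : ℝ), p ^ (s - 2) * (x ^ s / (x ^ 2 + 1 + c * x)) := by
    apply setIntegral_congr_fun measurableSet_Ioi
    intro x hx
    simp only [Set.mem_Ioi] at hx
    have hxp : (p * x) ^ s = p ^ s * x ^ s :=
      Real.mul_rpow hp.le hx.le
    have hden : (p * x) ^ 2 + p ^ 2 + c * p * (p * x)
        = p ^ 2 * (x ^ 2 + 1 + c * x) := by ring
    have hps : p ^ (s - 2) = p ^ s / p ^ (2 : ℕ) := by
      rw [← Real.rpow_natCast p 2, ← Real.rpow_sub hp]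
      norm_num
    simp only [hxp, hden, hps]
    rw [mul_div_mul_comm]
  rw [key, MeasureTheory.integral_const_mul] at h
  have hps : p ^ (s - 1) = p * p ^ (s - 2) := by
    rw [show s - 1 = 1 + (s - 2) by ring, Real.rpow_add hp, Real.rpow_one]
  have := h.symm
  rw [smul_eq_mul] at this
  have hp' : p ≠ 0 := hp.ne'
  field_simp at this
  simp only [show ∀ x : ℝ, p * x * c = c * p * x from fun x => by ring] at this
  rw [hps, this]

theorem stmt9 (m s : ℝ) (hm : 0 < m) (hs0 : 0 < s) (hs1 : s < 1)
    (hres :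
      Real.pi * Real.sqrt (m * (m + 2)) / (m + 1) +
        (∫ t in (-1 : ℝ)..1,
          t * ∫ p in Set.Ioi (0 : ℝ), p ^ s / (p ^ 2 + 1 + (2 / (m + 1)) * t * p)) = 0) :
    ∀ p : ℝ, 0 < p →
      2 * Real.pi ^ 2 * Real.sqrt (m * (m + 2)) / (m + 1) * p ^ (s - 1) +
        2 * Real.pi *
          (∫ t in (-1 : ℝ)..1,
            t * ∫ q in Set.Ioi (0 : ℝ),
              q ^ s / (q ^ 2 + p ^ 2 + (2 / (m + 1)) * t * p * q)) = 0 := by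
  intro p hp
  have hinner : ∀ t : ℝ,
      (∫ q in Set.Ioi (0 : ℝ), q ^ s / (q ^ 2 + p ^ 2 + (2 / (m + 1)) * t * p * q))
        = p ^ (s - 1) * ∫ q in Set.Ioi (0 : ℝ),
            q ^ s / (q ^ 2 + 1 + (2 / (m + 1)) * t * q) := fun t =>
    inner_scale s ((2 / (m + 1)) * t) p hp
  have hswap : (∫ t in (-1 : ℝ)..1,
      t * ∫ q in Set.Ioi (0 : ℝ), q ^ s / (q ^ 2 + p ^ 2 + (2 / (m + 1)) * t * p * q))
      = p ^ (s - 1) * ∫ t in (-1 : ℝ)..1,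
          t * ∫ q in Set.Ioi (0 : ℝ), q ^ s / (q ^ 2 + 1 + (2 / (m + 1)) * t * q) := by
    rw [← intervalIntegral.integral_const_mul]
    apply intervalIntegral.integral_congr
    intro t _
    beta_reduce
    rw [hinner t]
    ring
  rw [hswap]
  linear_combination (2 * Real.pi * p ^ (s - 1)) * hres
end

section
/- Let K be the integral operator on L²(ℝ³) with kernel K(k₁,k₂) = 1_{{|k₂| ≥ a|k₁|}} · |k₁|^{1/2}|k₂|^{1/2}/(|k₁|² + |k₂|² + (2/(m+1)) k₁·k₂)², where m > 0 and a > 1. Then the operator norm of K satisfies ‖K‖ ≤ √(c₁(a) c₂(a)), where c₁(a) = 4π ∫_a^∞ q^{5/2}/(1+q² − (2/(m+1))q)² dq and c₂(a) = 4π ∫_0^{1/a} q^{5/2}/(1+q² − (2/(m+1))q)² dq. -/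
open MeasureTheory intervalIntegral Real
open scoped RealInnerProductSpace
open MeasureTheory Measure Metric Set Real
open scoped ENNReal


noncomputable def wj (c q : ℝ) : ℝ := q ^ ((5:ℝ)/2) / (1 + q ^ 2 - c * q) ^ 2

noncomputable def Krj (c a r₁ r₂ : ℝ) : ℝ :=
  (if a * r₁ ≤ r₂ then (1:ℝ) else 0) * (r₁ ^ ((1:ℝ)/2) * r₂ ^ ((1:ℝ)/2)) /
    (r₁ ^ 2 + r₂ ^ 2 - c * (r₁ * r₂)) ^ 2

variable {c a : ℝ}

lemma denom1_pos (hc0 : 0 < c) (hc2 : c < 2) (q : ℝ) : 0 < 1 + q ^ 2 - c * q := by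
  nlinarith [sq_nonneg (q - 1), sq_nonneg (q + 1), sq_nonneg q]

lemma denom1_ge (hc0 : 0 < c) (hc2 : c < 2) (q : ℝ) :
    (1 - c / 2) * (1 + q ^ 2) ≤ 1 + q ^ 2 - c * q := by
  nlinarith [sq_nonneg (q - 1)]

lemma denom2_pos (hc0 : 0 < c) (hc2 : c < 2) {x y : ℝ} (hxy : 0 < x ^ 2 + y ^ 2) :
    0 < x ^ 2 + y ^ 2 - c * (x * y) := by
  nlinarith [sq_nonneg (x - y), sq_nonneg (x + y)]

lemma wj_nonneg {q : ℝ} (hq : 0 ≤ q) : 0 ≤ wj c q :=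
  div_nonneg (Real.rpow_nonneg hq _) (sq_nonneg _)

lemma wj_cont (hc0 : 0 < c) (hc2 : c < 2) : Continuous (wj c) := by
  apply Continuous.div
  · exact continuous_id.rpow_const (fun x => Or.inr (by norm_num))
  · continuity
  · intro q
    exact (pow_ne_zero 2 (denom1_pos hc0 hc2 q).ne')

lemma wj_meas : Measurable (wj c) := by
  unfold wj
  fun_prop

lemma Krj_nonneg (c a : ℝ) {r₁ r₂ : ℝ} (h1 : 0 ≤ r₁) (h2 : 0 ≤ r₂) : 0 ≤ Krj c a r₁ r₂ := by
  unfold Krj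
  apply div_nonneg _ (sq_nonneg _)
  apply mul_nonneg
  · split <;> norm_num
  · exact mul_nonneg (Real.rpow_nonneg h1 _) (Real.rpow_nonneg h2 _)

lemma Krj_meas2 (c a r₁ : ℝ) : Measurable (fun r₂ => Krj c a r₁ r₂) := by
  unfold Krj
  apply Measurable.div
  · apply Measurable.mul
    · exact Measurable.ite (measurableSet_le measurable_const measurable_id) measurable_const
        measurable_const
    · fun_prop
  · fun_prop

lemma Krj_meas1 (c a r₂ : ℝ) : Measurable (fun r₁ => Krj c a r₁ r₂) := by
  unfold Krj
  apply Measurable.div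
  · apply Measurable.mul
    · exact Measurable.ite (measurableSet_le (by fun_prop) measurable_const) measurable_const
        measurable_const
    · fun_prop
  · fun_prop

lemma wj_int_Ioi (hc0 : 0 < c) (hc2 : c < 2) (ha : 0 < a) : IntegrableOn (wj c) (Ioi a) := by
  have hε : 0 < 1 - c / 2 := by linarith
  apply Integrable.mono' ((integrableOn_Ioi_rpow_of_lt (show (-3/2:ℝ) < -1 by norm_num) ha).const_mul ((1 - c/2)^2)⁻¹)
  · exact (wj_meas).aestronglyMeasurable
  · filter_upwards [ae_restrict_mem measurableSet_Ioi] with q hq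
    have hq0 : 0 < q := ha.trans hq
    rw [Real.norm_of_nonneg (wj_nonneg hq0.le)]
    have h1 : (1 - c/2) * (1 + q ^ 2) ≤ 1 + q ^ 2 - c * q := denom1_ge hc0 hc2 q
    have h0 : 0 ≤ (1 - c/2) * (1 + q ^ 2) := by positivity
    have h2' : ((1 - c/2) * (1 + q ^ 2)) ^ 2 ≤ (1 + q ^ 2 - c * q) ^ 2 := pow_le_pow_left₀ h0 h1 2
    have h2 : (1 - c/2)^2 * q ^ 4 ≤ (1 + q ^ 2 - c * q) ^ 2 := by nlinarith [sq_nonneg q, sq_nonneg (1 - c/2)]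
    have h3 : wj c q ≤ q ^ ((5:ℝ)/2) / ((1 - c/2)^2 * q ^ 4) := by
      apply div_le_div_of_nonneg_left (Real.rpow_nonneg hq0.le _) (by positivity) h2
    refine h3.trans (le_of_eq ?_)
    have h4 : (q:ℝ) ^ (4:ℕ) = q ^ ((4:ℝ)) := (Real.rpow_natCast q 4).symm
    rw [h4, div_mul_eq_div_div_swap, ← Real.rpow_sub hq0]
    norm_num [div_eq_inv_mul]

lemma lintegral_fun_norm_addHaar' {E : Type*} [NormedAddCommGroup E] [NormedSpace ℝ E]
    [MeasurableSpace E] [BorelSpace E] [Nontrivial E] [FiniteDimensional ℝ E]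
    (μ : Measure E) [μ.IsAddHaarMeasure] (f : ℝ → ENNReal) (hf : Measurable f) :
    ∫⁻ x, f ‖x‖ ∂μ = (Module.finrank ℝ E) * μ (ball 0 1) *
      ∫⁻ y in Ioi (0:ℝ), ENNReal.ofReal (y ^ (Module.finrank ℝ E - 1)) * f y := by
  calc
    ∫⁻ x, f ‖x‖ ∂μ = ∫⁻ x : ({(0)}ᶜ : Set E), f (‖x.1‖) ∂(μ.comap (↑)) := by
      rw [lintegral_subtype_comap (measurableSet_singleton _).compl fun x ↦ f (‖x‖),
        MeasureTheory.restrict_compl_singleton]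
    _ = ∫⁻ x : sphere (0 : E) 1 × Ioi (0 : ℝ), f x.2
        ∂μ.toSphere.prod (.volumeIoiPow (Module.finrank ℝ E - 1)) :=
      by
        have h := μ.measurePreserving_homeomorphUnitSphereProd.lintegral_comp_emb
          (Homeomorph.measurableEmbedding _) (f ∘ Subtype.val ∘ Prod.snd)
        refine (lintegral_congr fun x => ?_).trans h
        show f ‖(x:E)‖ = f (‖(x:E)‖ / 1); rw [div_one]
    _ = μ.toSphere univ * ∫⁻ y : Ioi (0:ℝ), f y ∂(.volumeIoiPow (Module.finrank ℝ E - 1)) := by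
      rw [lintegral_prod (fun z : ↥(sphere (0:E) 1) × ↥(Ioi (0:ℝ)) => f z.2) (by fun_prop)]
      simp [lintegral_const, mul_comm]
    _ = _ := by
      rw [Measure.toSphere_apply_univ, Measure.volumeIoiPow,
        lintegral_withDensity_eq_lintegral_mul _
          ((measurable_subtype_coe.pow_const _).ennreal_ofReal)
          (hf.comp measurable_subtype_coe) (g := fun y => f y.1)]
      simp only [Pi.mul_apply]
      rw [lintegral_subtype_comap measurableSet_Ioi
        (fun y => ENNReal.ofReal (y ^ (Module.finrank ℝ E - 1)) * f y), mul_assoc]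

lemma vol3 : ((3:ℕ) : ℝ≥0∞) * volume (ball (0 : EuclideanSpace ℝ (Fin 3)) 1) =
    ENNReal.ofReal (4 * π) := by
  rw [EuclideanSpace.volume_ball]
  simp only [Fintype.card_fin, ENNReal.ofReal_one, one_pow, one_mul]
  have h1 : ((3:ℕ):ℝ) / 2 + 1 = 3/2 + 1 := by norm_num
  rw [h1, Real.Gamma_add_one (by norm_num)]
  have h2 : (3/2 : ℝ) = 1/2 + 1 := by norm_num
  rw [h2, Real.Gamma_add_one (by norm_num), Real.Gamma_one_half_eq]
  have hπ : 0 < Real.sqrt π := Real.sqrt_pos.mpr Real.pi_pos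
  have hπ2 : Real.sqrt π ^ 3 = π * Real.sqrt π := by
    rw [pow_succ, Real.sq_sqrt Real.pi_pos.le]
  have h3 : Real.sqrt π ^ 3 / ((1/2 + 1) * (1/2 * Real.sqrt π)) = 4/3 * π := by
    rw [hπ2]; field_simp; ring
  rw [h3]
  rw [show ((3:ℕ):ℝ≥0∞) = ENNReal.ofReal 3 by simp, ← ENNReal.ofReal_mul (by norm_num)]
  congr 1
  ring

lemma key_row (hc0 : 0 < c) (hc2 : c < 2) {r₁ y : ℝ} (hr : 0 < r₁) (hy : 0 < y) :
    y ^ 2 * Krj c a r₁ y = r₁⁻¹ * ((Ici a).indicator (wj c) (r₁⁻¹ * y)) := by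
  unfold Krj wj
  rw [Set.indicator_apply]
  have hcond : (a * r₁ ≤ y) ↔ (r₁⁻¹ * y ∈ Ici a) := by
    rw [mem_Ici, inv_mul_eq_div, le_div_iff₀ hr]
  by_cases hle : a * r₁ ≤ y
  · rw [if_pos hle, if_pos (hcond.mp hle)]
    have hq : r₁⁻¹ * y = y / r₁ := inv_mul_eq_div _ _
    have hs2 : (r₁ ^ ((1:ℝ)/2)) ^ 2 = r₁ := by
      rw [← Real.rpow_natCast (r₁ ^ _) 2, ← Real.rpow_mul hr.le]; norm_num
    have ht2 : (y ^ ((1:ℝ)/2)) ^ 2 = y := by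
      rw [← Real.rpow_natCast (y ^ _) 2, ← Real.rpow_mul hy.le]; norm_num
    have h5 : (r₁⁻¹ * y) ^ ((5:ℝ)/2) = (y ^ ((1:ℝ)/2)) ^ 5 / (r₁ ^ ((1:ℝ)/2)) ^ 5 := by
      rw [hq, Real.div_rpow hy.le hr.le]
      congr 1 <;> rw [← Real.rpow_natCast _ 5, ← Real.rpow_mul (by positivity)] <;> norm_num
    have hD : 0 < r₁ ^ 2 + y ^ 2 - c * (r₁ * y) :=
      denom2_pos hc0 hc2 (by positivity)
    have hDq : 0 < 1 + (r₁⁻¹ * y) ^ 2 - c * (r₁⁻¹ * y) := denom1_pos hc0 hc2 _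
    set s := r₁ ^ ((1:ℝ)/2) with hs
    set t := y ^ ((1:ℝ)/2) with ht
    have hs0 : s ≠ 0 := by
      intro h; rw [h] at hs2; simp at hs2; exact hr.ne' hs2.symm
    have ht0 : t ≠ 0 := by
      intro h; rw [h] at ht2; simp at ht2; exact hy.ne' ht2.symm
    have hDne : ((s^2)^2 + (t^2)^2 - c*(s^2*(t^2))) ≠ 0 := by rw [hs2, ht2]; exact hD.ne'
    have hDqne : (1 + ((s^2)⁻¹*(t^2))^2 - c*((s^2)⁻¹*(t^2))) ≠ 0 := by
      rw [hs2, ht2]; exact hDq.ne'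
    have hden : 1 + ((s^2)⁻¹ * t^2)^2 - c*((s^2)⁻¹ * t^2) =
        ((s^2)^2 + (t^2)^2 - c*(s^2*(t^2)))/((s^2)^2) := by
      field_simp
    rw [h5, one_mul, ← hs2, ← ht2, hden]
    rw [div_pow]
    field_simp
  · rw [if_neg hle, if_neg (fun h => hle (hcond.mpr h))]
    simp

lemma key_col (hc0 : 0 < c) (hc2 : c < 2) (ha0 : 0 < a) {r₂ y : ℝ} (hr : 0 < r₂) (hy : 0 < y) :
    y ^ 2 * Krj c a y r₂ = r₂⁻¹ * ((Ioc 0 (1/a)).indicator (wj c) (r₂⁻¹ * y)) := by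
  unfold Krj wj
  rw [Set.indicator_apply]
  have hcond : (a * y ≤ r₂) ↔ (r₂⁻¹ * y ∈ Ioc 0 (1/a)) := by
    rw [mem_Ioc, inv_mul_eq_div]
    constructor
    · intro h
      exact ⟨by positivity, by rw [div_le_div_iff₀ hr ha0]; linarith [h]⟩
    · intro ⟨_, h⟩
      rw [div_le_div_iff₀ hr ha0] at h; linarith [h]
  by_cases hle : a * y ≤ r₂
  · rw [if_pos hle, if_pos (hcond.mp hle)]
    have hq : r₂⁻¹ * y = y / r₂ := inv_mul_eq_div _ _
    have hs2 : (r₂ ^ ((1:ℝ)/2)) ^ 2 = r₂ := by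
      rw [← Real.rpow_natCast (r₂ ^ _) 2, ← Real.rpow_mul hr.le]; norm_num
    have ht2 : (y ^ ((1:ℝ)/2)) ^ 2 = y := by
      rw [← Real.rpow_natCast (y ^ _) 2, ← Real.rpow_mul hy.le]; norm_num
    have h5 : (r₂⁻¹ * y) ^ ((5:ℝ)/2) = (y ^ ((1:ℝ)/2)) ^ 5 / (r₂ ^ ((1:ℝ)/2)) ^ 5 := by
      rw [hq, Real.div_rpow hy.le hr.le]
      congr 1 <;> rw [← Real.rpow_natCast _ 5, ← Real.rpow_mul (by positivity)] <;> norm_num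
    have hD : 0 < y ^ 2 + r₂ ^ 2 - c * (y * r₂) :=
      denom2_pos hc0 hc2 (by positivity)
    have hDq : 0 < 1 + (r₂⁻¹ * y) ^ 2 - c * (r₂⁻¹ * y) := denom1_pos hc0 hc2 _
    set s := r₂ ^ ((1:ℝ)/2) with hs
    set t := y ^ ((1:ℝ)/2) with ht
    have hs0 : s ≠ 0 := by
      intro h; rw [h] at hs2; simp at hs2; exact hr.ne' hs2.symm
    have ht0 : t ≠ 0 := by
      intro h; rw [h] at ht2; simp at ht2; exact hy.ne' ht2.symm
    have hDne : ((t^2)^2 + (s^2)^2 - c*(t^2*(s^2))) ≠ 0 := by rw [hs2, ht2]; exact hD.ne'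
    have hden : 1 + ((s^2)⁻¹ * t^2)^2 - c*((s^2)⁻¹ * t^2) =
        ((t^2)^2 + (s^2)^2 - c*(t^2*(s^2)))/((s^2)^2) := by
      field_simp; ring
    rw [h5, one_mul, ← hs2, ← ht2, hden]
    rw [div_pow]
    field_simp
  · rw [if_neg hle, if_neg (fun h => hle (hcond.mpr h))]
    simp

lemma row_bound (hc0 : 0 < c) (hc2 : c < 2) (ha : 1 < a) {r₁ : ℝ} (hr : 0 ≤ r₁) :
    ∫⁻ k : EuclideanSpace ℝ (Fin 3), ENNReal.ofReal (Krj c a r₁ ‖k‖) ≤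
      ENNReal.ofReal (4 * π * ∫ q in Ioi a, wj c q) := by
  have ha0 : (0:ℝ) < a := lt_trans one_pos ha
  have hC1 : 0 ≤ ∫ q in Ioi a, wj c q :=
    setIntegral_nonneg measurableSet_Ioi (fun q hq => wj_nonneg (le_of_lt (lt_trans ha0 hq)))
  rw [lintegral_fun_norm_addHaar' volume (fun r => ENNReal.ofReal (Krj c a r₁ r))
    ((Krj_meas2 c a r₁).ennreal_ofReal)]
  simp only [finrank_euclideanSpace_fin]
  rw [vol3, ENNReal.ofReal_mul (by positivity : (0:ℝ) ≤ 4 * π)]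
  apply mul_le_mul_right
  have hmerge : ∀ y : ℝ, ENNReal.ofReal (y ^ (3-1)) * ENNReal.ofReal (Krj c a r₁ y)
      = ENNReal.ofReal (y ^ 2 * Krj c a r₁ y) := by
    intro y
    rw [(by norm_num : (3-1 : ℕ) = 2), ← ENNReal.ofReal_mul (sq_nonneg y)]
  simp only [hmerge]
  rcases eq_or_lt_of_le hr with h0 | h0
  · have : ∀ y : ℝ, Krj c a r₁ y = 0 := by
      intro y
      rw [← h0]
      unfold Krj
      rw [Real.zero_rpow (by norm_num : ((1:ℝ)/2) ≠ 0)]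
      simp
    simp only [this, mul_zero, ENNReal.ofReal_zero, lintegral_zero]
    exact zero_le
  · set W := (Ici a).indicator (wj c) with hW
    have hWnn : ∀ x, 0 ≤ W x := fun x =>
      Set.indicator_apply_nonneg (fun hx => wj_nonneg (le_trans ha0.le hx))
    have hWint : Integrable W := (integrable_indicator_iff measurableSet_Ici).mpr
      ((integrableOn_Ici_iff_integrableOn_Ioi).mpr (wj_int_Ioi hc0 hc2 ha0))
    calc ∫⁻ y in Ioi 0, ENNReal.ofReal (y ^ 2 * Krj c a r₁ y)
        = ∫⁻ y in Ioi 0, ENNReal.ofReal (r₁⁻¹ * W (r₁⁻¹ * y)) := by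
          apply setLIntegral_congr_fun measurableSet_Ioi
          exact (fun y hy => by rw [key_row hc0 hc2 h0 hy])
      _ = ENNReal.ofReal (∫ y in Ioi 0, r₁⁻¹ * W (r₁⁻¹ * y)) := by
          rw [← ofReal_integral_eq_lintegral_ofReal]
          · exact ((hWint.comp_mul_left' (inv_ne_zero h0.ne')).const_mul r₁⁻¹).integrableOn
          · exact ae_of_all _ (fun y => mul_nonneg (by positivity) (hWnn _))
      _ ≤ ENNReal.ofReal (∫ q in Ioi a, wj c q) := by
          apply ENNReal.ofReal_le_ofReal
          rw [MeasureTheory.integral_const_mul,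
            integral_comp_mul_left_Ioi W 0 (inv_pos.mpr h0), mul_zero, smul_eq_mul, inv_inv,
            hW, setIntegral_indicator measurableSet_Ici,
            (show Ioi (0:ℝ) ∩ Ici a = Ici a from
              inter_eq_self_of_subset_right (Ici_subset_Ioi.mpr ha0)),
            integral_Ici_eq_integral_Ioi, ← mul_assoc, inv_mul_cancel₀ h0.ne', one_mul]

lemma col_bound (hc0 : 0 < c) (hc2 : c < 2) (ha : 1 < a) {r₂ : ℝ} (hr : 0 ≤ r₂) :
    ∫⁻ k : EuclideanSpace ℝ (Fin 3), ENNReal.ofReal (Krj c a ‖k‖ r₂) ≤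
      ENNReal.ofReal (4 * π * ∫ q in (0:ℝ)..(1/a), wj c q) := by
  have ha0 : (0:ℝ) < a := lt_trans one_pos ha
  have hC2 : 0 ≤ ∫ q in (0:ℝ)..(1/a), wj c q :=
    intervalIntegral.integral_nonneg (by positivity) (fun q hq => wj_nonneg hq.1)
  rw [lintegral_fun_norm_addHaar' volume (fun r => ENNReal.ofReal (Krj c a r r₂))
    ((Krj_meas1 c a r₂).ennreal_ofReal)]
  simp only [finrank_euclideanSpace_fin]
  rw [vol3, ENNReal.ofReal_mul (by positivity : (0:ℝ) ≤ 4 * π)]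
  apply mul_le_mul_right
  have hmerge : ∀ y : ℝ, ENNReal.ofReal (y ^ (3-1)) * ENNReal.ofReal (Krj c a y r₂)
      = ENNReal.ofReal (y ^ 2 * Krj c a y r₂) := by
    intro y
    rw [(by norm_num : (3-1 : ℕ) = 2), ← ENNReal.ofReal_mul (sq_nonneg y)]
  simp only [hmerge]
  rcases eq_or_lt_of_le hr with h0 | h0
  · have hz : ∀ y : ℝ, y ∈ Ioi (0:ℝ) → ENNReal.ofReal (y ^ 2 * Krj c a y r₂) = 0 := by
      intro y hy
      have : ¬ (a * y ≤ r₂) := by rw [← h0]; push_neg; exact mul_pos ha0 hy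
      unfold Krj
      rw [if_neg this]
      simp
    rw [setLIntegral_congr_fun measurableSet_Ioi hz, lintegral_zero]
    exact zero_le
  · set V := (Ioc 0 (1/a)).indicator (wj c) with hV
    have hVnn : ∀ x, 0 ≤ V x := fun x =>
      Set.indicator_apply_nonneg (fun hx => wj_nonneg hx.1.le)
    have hVint : Integrable V := (integrable_indicator_iff measurableSet_Ioc).mpr
      ((wj_cont hc0 hc2).integrableOn_Ioc)
    calc ∫⁻ y in Ioi 0, ENNReal.ofReal (y ^ 2 * Krj c a y r₂)
        = ∫⁻ y in Ioi 0, ENNReal.ofReal (r₂⁻¹ * V (r₂⁻¹ * y)) := by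
          apply setLIntegral_congr_fun measurableSet_Ioi
          exact (fun y hy => by rw [key_col hc0 hc2 ha0 h0 hy])
      _ = ENNReal.ofReal (∫ y in Ioi 0, r₂⁻¹ * V (r₂⁻¹ * y)) := by
          rw [← ofReal_integral_eq_lintegral_ofReal]
          · exact ((hVint.comp_mul_left' (inv_ne_zero h0.ne')).const_mul r₂⁻¹).integrableOn
          · exact ae_of_all _ (fun y => mul_nonneg (by positivity) (hVnn _))
      _ ≤ ENNReal.ofReal (∫ q in (0:ℝ)..(1/a), wj c q) := by
          apply ENNReal.ofReal_le_ofReal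
          rw [MeasureTheory.integral_const_mul,
            integral_comp_mul_left_Ioi V 0 (inv_pos.mpr h0), mul_zero, smul_eq_mul, inv_inv,
            hV, setIntegral_indicator measurableSet_Ioc,
            (show Ioi (0:ℝ) ∩ Ioc 0 (1/a) = Ioc 0 (1/a) from
              inter_eq_self_of_subset_right Ioc_subset_Ioi_self),
            intervalIntegral.integral_of_le (by positivity : (0:ℝ) ≤ 1/a),
            ← mul_assoc, inv_mul_cancel₀ h0.ne', one_mul]

lemma kernel_le (hc0 : 0 < c) (hc2 : c < 2) (k₁ k₂ : EuclideanSpace ℝ (Fin 3)) :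
    (if a * ‖k₁‖ ≤ ‖k₂‖ then (1:ℝ) else 0) * (‖k₁‖ ^ ((1:ℝ)/2) * ‖k₂‖ ^ ((1:ℝ)/2)) /
      (‖k₁‖ ^ 2 + ‖k₂‖ ^ 2 + c * ⟪k₁, k₂⟫) ^ 2 ≤ Krj c a ‖k₁‖ ‖k₂‖ := by
  unfold Krj
  by_cases h : ‖k₁‖ ^ 2 + ‖k₂‖ ^ 2 = 0
  · have h1 : ‖k₁‖ = 0 := by nlinarith [sq_nonneg ‖k₁‖, sq_nonneg ‖k₂‖, norm_nonneg k₁]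
    simp [h1, Real.zero_rpow (show ((1:ℝ)/2) ≠ 0 by norm_num)]
  · have hpos : 0 < ‖k₁‖ ^ 2 + ‖k₂‖ ^ 2 :=
      lt_of_le_of_ne (by positivity) (Ne.symm h)
    have hD' : 0 < ‖k₁‖ ^ 2 + ‖k₂‖ ^ 2 - c * (‖k₁‖ * ‖k₂‖) := denom2_pos hc0 hc2 hpos
    have hinner := abs_le.mp (abs_real_inner_le_norm k₁ k₂)
    have hDD : ‖k₁‖ ^ 2 + ‖k₂‖ ^ 2 - c * (‖k₁‖ * ‖k₂‖) ≤
        ‖k₁‖ ^ 2 + ‖k₂‖ ^ 2 + c * ⟪k₁, k₂⟫ := by nlinarith [hinner.1]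
    have hsq : (‖k₁‖ ^ 2 + ‖k₂‖ ^ 2 - c * (‖k₁‖ * ‖k₂‖)) ^ 2 ≤
        (‖k₁‖ ^ 2 + ‖k₂‖ ^ 2 + c * ⟪k₁, k₂⟫) ^ 2 := pow_le_pow_left₀ hD'.le hDD 2
    have hN : 0 ≤ (if a * ‖k₁‖ ≤ ‖k₂‖ then (1:ℝ) else 0) * (‖k₁‖ ^ ((1:ℝ)/2) * ‖k₂‖ ^ ((1:ℝ)/2)) := by
      apply mul_nonneg
      · split <;> norm_num
      · exact mul_nonneg (Real.rpow_nonneg (norm_nonneg _) _) (Real.rpow_nonneg (norm_nonneg _) _)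
    exact div_le_div_of_nonneg_left hN (pow_pos hD' 2) hsq

lemma schur_main {α : Type*} [MeasurableSpace α] (μ : Measure α) [SigmaFinite μ]
    (K : α → α → ℝ) (hKnn : ∀ x y, 0 ≤ K x y) (hKm : Measurable (Function.uncurry K))
    (f g : α → ℝ) (hfmeas : Measurable f) (hgmeas : Measurable g)
    (hf : Integrable (fun x => (f x) ^ 2) μ) (hg : Integrable (fun x => (g x) ^ 2) μ)
    (C₁ C₂ : ℝ) (hC₁ : 0 ≤ C₁) (hC₂ : 0 ≤ C₂)
    (hrow : ∀ x, ∫⁻ y, ENNReal.ofReal (K x y) ∂μ ≤ ENNReal.ofReal C₁)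
    (hcol : ∀ y, ∫⁻ x, ENNReal.ofReal (K x y) ∂μ ≤ ENNReal.ofReal C₂) :
    (∫ x, ∫ y, |f x| * K x y * |g y| ∂μ ∂μ) ≤
      Real.sqrt (C₁ * C₂) * (Real.sqrt (∫ x, (f x) ^ 2 ∂μ) * Real.sqrt (∫ x, (g x) ^ 2 ∂μ)) := by
  classical
  set F := ∫ x, (f x) ^ 2 ∂μ with hFdef
  set G := ∫ x, (g x) ^ 2 ∂μ with hGdef
  have hF0 : 0 ≤ F := integral_nonneg fun x => sq_nonneg _
  have hG0 : 0 ≤ G := integral_nonneg fun x => sq_nonneg _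
  have hFl : ∫⁻ x, ENNReal.ofReal ((f x) ^ 2) ∂μ = ENNReal.ofReal F :=
    (ofReal_integral_eq_lintegral_ofReal hf (ae_of_all _ fun x => sq_nonneg _)).symm
  have hGl : ∫⁻ x, ENNReal.ofReal ((g x) ^ 2) ∂μ = ENNReal.ofReal G :=
    (ofReal_integral_eq_lintegral_ofReal hg (ae_of_all _ fun x => sq_nonneg _)).symm
  set oK : α × α → ℝ≥0∞ := fun p => ENNReal.ofReal (K p.1 p.2) with hoKdef
  have hoKm : Measurable oK := hKm.ennreal_ofReal
  set φ : α × α → ℝ≥0∞ := fun p => ENNReal.ofReal |f p.1| * oK p ^ ((1:ℝ)/2) with hφdef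
  set ψ : α × α → ℝ≥0∞ := fun p => oK p ^ ((1:ℝ)/2) * ENNReal.ofReal |g p.2| with hψdef
  have hφm : Measurable φ :=
    ((hfmeas.comp measurable_fst).abs.ennreal_ofReal).mul (hoKm.pow_const _)
  have hψm : Measurable ψ :=
    (hoKm.pow_const _).mul ((hgmeas.comp measurable_snd).abs.ennreal_ofReal)
  have hhalf : ∀ x : ℝ≥0∞, x ^ ((1:ℝ)/2) * x ^ ((1:ℝ)/2) = x := fun x => by
    rw [← ENNReal.rpow_add_of_nonneg _ _ (by norm_num) (by norm_num)]
    norm_num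
  have hsplit : ∀ p : α × α, ENNReal.ofReal (|f p.1| * K p.1 p.2 * |g p.2|) = φ p * ψ p := by
    intro p
    rw [ENNReal.ofReal_mul (mul_nonneg (abs_nonneg _) (hKnn _ _)),
      ENNReal.ofReal_mul (abs_nonneg _)]
    rw [show φ p * ψ p =
      ENNReal.ofReal |f p.1| * (oK p ^ ((1:ℝ)/2) * oK p ^ ((1:ℝ)/2)) * ENNReal.ofReal |g p.2| from
      by rw [hφdef, hψdef]; ring, hhalf]
  have hφ2 : ∀ p : α × α, φ p ^ (2:ℝ) = ENNReal.ofReal ((f p.1) ^ 2) * oK p := by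
    intro p
    rw [hφdef]
    rw [ENNReal.mul_rpow_of_nonneg _ _ (by norm_num : (0:ℝ) ≤ 2),
      ENNReal.ofReal_rpow_of_nonneg (abs_nonneg _) (by norm_num : (0:ℝ) ≤ 2),
      Real.rpow_two, sq_abs, ← ENNReal.rpow_mul]
    norm_num
  have hψ2 : ∀ p : α × α, ψ p ^ (2:ℝ) = oK p * ENNReal.ofReal ((g p.2) ^ 2) := by
    intro p
    rw [hψdef]
    rw [ENNReal.mul_rpow_of_nonneg _ _ (by norm_num : (0:ℝ) ≤ 2),
      ENNReal.ofReal_rpow_of_nonneg (abs_nonneg _) (by norm_num : (0:ℝ) ≤ 2),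
      Real.rpow_two, sq_abs, ← ENNReal.rpow_mul]
    norm_num
  have hφint : ∫⁻ p, φ p ^ (2:ℝ) ∂(μ.prod μ) ≤ ENNReal.ofReal (C₁ * F) := by
    calc ∫⁻ p, φ p ^ (2:ℝ) ∂(μ.prod μ)
        = ∫⁻ p, ENNReal.ofReal ((f p.1) ^ 2) * oK p ∂(μ.prod μ) := lintegral_congr hφ2
      _ = ∫⁻ x, ∫⁻ y, ENNReal.ofReal ((f x) ^ 2) * oK (x, y) ∂μ ∂μ :=
          lintegral_prod _ ((((hfmeas.comp measurable_fst).pow_const 2).ennreal_ofReal.mul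
            hoKm).aemeasurable)
      _ = ∫⁻ x, ENNReal.ofReal ((f x) ^ 2) * ∫⁻ y, oK (x, y) ∂μ ∂μ :=
          lintegral_congr fun x => lintegral_const_mul _ (hoKm.comp measurable_prodMk_left)
      _ ≤ ∫⁻ x, ENNReal.ofReal ((f x) ^ 2) * ENNReal.ofReal C₁ ∂μ :=
          lintegral_mono fun x => mul_le_mul_right (hrow x) _
      _ = (∫⁻ x, ENNReal.ofReal ((f x) ^ 2) ∂μ) * ENNReal.ofReal C₁ :=
          lintegral_mul_const _ ((hfmeas.pow_const 2).ennreal_ofReal)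
      _ = ENNReal.ofReal (C₁ * F) := by
          rw [hFl, ← ENNReal.ofReal_mul hF0, mul_comm]
  have hψint : ∫⁻ p, ψ p ^ (2:ℝ) ∂(μ.prod μ) ≤ ENNReal.ofReal (C₂ * G) := by
    calc ∫⁻ p, ψ p ^ (2:ℝ) ∂(μ.prod μ)
        = ∫⁻ p, oK p * ENNReal.ofReal ((g p.2) ^ 2) ∂(μ.prod μ) := lintegral_congr hψ2
      _ = ∫⁻ y, ∫⁻ x, oK (x, y) * ENNReal.ofReal ((g y) ^ 2) ∂μ ∂μ :=
          lintegral_prod_symm _ ((hoKm.mul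
            ((hgmeas.comp measurable_snd).pow_const 2).ennreal_ofReal).aemeasurable)
      _ = ∫⁻ y, (∫⁻ x, oK (x, y) ∂μ) * ENNReal.ofReal ((g y) ^ 2) ∂μ :=
          lintegral_congr fun y => lintegral_mul_const _ (hoKm.comp measurable_prodMk_right)
      _ ≤ ∫⁻ y, ENNReal.ofReal C₂ * ENNReal.ofReal ((g y) ^ 2) ∂μ :=
          lintegral_mono fun y => mul_le_mul_left (hcol y) _
      _ = ENNReal.ofReal C₂ * ∫⁻ y, ENNReal.ofReal ((g y) ^ 2) ∂μ :=
          lintegral_const_mul _ ((hgmeas.pow_const 2).ennreal_ofReal)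
      _ = ENNReal.ofReal (C₂ * G) := by
          rw [hGl, ← ENNReal.ofReal_mul hC₂]
  set A := ∫⁻ p, ENNReal.ofReal (|f p.1| * K p.1 p.2 * |g p.2|) ∂(μ.prod μ) with hAdef
  have hjm : Measurable fun p : α × α => |f p.1| * K p.1 p.2 * |g p.2| :=
    (((hfmeas.comp measurable_fst).abs.mul hKm).mul (hgmeas.comp measurable_snd).abs)
  have hpq : Real.HolderConjugate 2 2 := by rw [Real.holderConjugate_iff]; norm_num
  have hAbound : A ≤ ENNReal.ofReal (Real.sqrt (C₁ * F) * Real.sqrt (C₂ * G)) := by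
    calc A = ∫⁻ p, (φ * ψ) p ∂(μ.prod μ) := lintegral_congr fun p => hsplit p
      _ ≤ (∫⁻ p, φ p ^ (2:ℝ) ∂(μ.prod μ)) ^ ((1:ℝ)/2) *
          (∫⁻ p, ψ p ^ (2:ℝ) ∂(μ.prod μ)) ^ ((1:ℝ)/2) :=
          ENNReal.lintegral_mul_le_Lp_mul_Lq _ hpq hφm.aemeasurable hψm.aemeasurable
      _ ≤ (ENNReal.ofReal (C₁ * F)) ^ ((1:ℝ)/2) * (ENNReal.ofReal (C₂ * G)) ^ ((1:ℝ)/2) :=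
          mul_le_mul' (ENNReal.rpow_le_rpow hφint (by norm_num))
            (ENNReal.rpow_le_rpow hψint (by norm_num))
      _ = ENNReal.ofReal (Real.sqrt (C₁ * F) * Real.sqrt (C₂ * G)) := by
          rw [ENNReal.ofReal_rpow_of_nonneg (by positivity) (by norm_num),
            ENNReal.ofReal_rpow_of_nonneg (by positivity) (by norm_num),
            ← ENNReal.ofReal_mul (by positivity), ← Real.sqrt_eq_rpow, ← Real.sqrt_eq_rpow]
  have hinn : ∀ x y, 0 ≤ |f x| * K x y * |g y| := fun x y =>
    mul_nonneg (mul_nonneg (abs_nonneg _) (hKnn x y)) (abs_nonneg _)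
  have hApd : ∫⁻ x, ∫⁻ y, ENNReal.ofReal (|f x| * K x y * |g y|) ∂μ ∂μ = A :=
    (lintegral_prod _ hjm.ennreal_ofReal.aemeasurable).symm
  set u : α → ℝ := fun x => ∫ y, |f x| * K x y * |g y| ∂μ with hudef
  have hu_nonneg : ∀ x, 0 ≤ u x := fun x => integral_nonneg fun y => hinn x y
  have husm : AEStronglyMeasurable u μ :=
    (hjm.stronglyMeasurable.integral_prod_right').aestronglyMeasurable
  have step : ∫⁻ x, ENNReal.ofReal (u x) ∂μ ≤ A := by
    rw [← hApd]
    apply lintegral_mono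
    intro x
    by_cases hi : Integrable (fun y => |f x| * K x y * |g y|) μ
    · exact le_of_eq (ofReal_integral_eq_lintegral_ofReal hi (ae_of_all _ fun y => hinn x y))
    · rw [hudef]
      simp only
      rw [integral_undef hi]
      simp
  have hint_eq : ∫ x, u x ∂μ = (∫⁻ x, ENNReal.ofReal (u x) ∂μ).toReal :=
    integral_eq_lintegral_of_nonneg_ae (ae_of_all _ hu_nonneg) husm
  calc ∫ x, u x ∂μ = (∫⁻ x, ENNReal.ofReal (u x) ∂μ).toReal := hint_eq
    _ ≤ (ENNReal.ofReal (Real.sqrt (C₁ * F) * Real.sqrt (C₂ * G))).toReal :=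
        ENNReal.toReal_mono ENNReal.ofReal_ne_top (step.trans hAbound)
    _ = Real.sqrt (C₁ * F) * Real.sqrt (C₂ * G) := ENNReal.toReal_ofReal (by positivity)
    _ = Real.sqrt (C₁ * C₂) * (Real.sqrt F * Real.sqrt G) := by
        rw [Real.sqrt_mul hC₁, Real.sqrt_mul hC₂, Real.sqrt_mul hC₁]
        ring


theorem stmt13 (m a : ℝ) (hm : 0 < m) (ha : 1 < a)
    (f g : EuclideanSpace ℝ (Fin 3) → ℝ) (hfmeas : Measurable f) (hgmeas : Measurable g)
    (hf : Integrable (fun x => (f x) ^ 2)) (hg : Integrable (fun x => (g x) ^ 2)) :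
    (∫ k₁ : EuclideanSpace ℝ (Fin 3), ∫ k₂ : EuclideanSpace ℝ (Fin 3),
        |f k₁| *
          ((if a * ‖k₁‖ ≤ ‖k₂‖ then (1 : ℝ) else 0) *
            (‖k₁‖ ^ ((1 : ℝ) / 2) * ‖k₂‖ ^ ((1 : ℝ) / 2)) /
              (‖k₁‖ ^ 2 + ‖k₂‖ ^ 2 + (2 / (m + 1)) * ⟪k₁, k₂⟫) ^ 2) *
          |g k₂|) ≤
      Real.sqrt
          ((4 * Real.pi *
              ∫ q in Set.Ioi a, q ^ ((5 : ℝ) / 2) / (1 + q ^ 2 - (2 / (m + 1)) * q) ^ 2) *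
            (4 * Real.pi *
              ∫ q in (0 : ℝ)..(1 / a),
                q ^ ((5 : ℝ) / 2) / (1 + q ^ 2 - (2 / (m + 1)) * q) ^ 2)) *
        (Real.sqrt (∫ x, (f x) ^ 2) * Real.sqrt (∫ x, (g x) ^ 2)) := by
  have hm1 : (0:ℝ) < m + 1 := by linarith
  have hc0 : (0:ℝ) < 2 / (m + 1) := by positivity
  have hc2 : (2:ℝ) / (m + 1) < 2 := by rw [div_lt_iff₀ hm1]; nlinarith
  have ha0 : (0:ℝ) < a := lt_trans one_pos ha
  set c : ℝ := 2 / (m + 1) with hcdef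
  set K : EuclideanSpace ℝ (Fin 3) → EuclideanSpace ℝ (Fin 3) → ℝ := fun k₁ k₂ =>
    (if a * ‖k₁‖ ≤ ‖k₂‖ then (1:ℝ) else 0) * (‖k₁‖ ^ ((1:ℝ)/2) * ‖k₂‖ ^ ((1:ℝ)/2)) /
      (‖k₁‖ ^ 2 + ‖k₂‖ ^ 2 + c * ⟪k₁, k₂⟫) ^ 2 with hKdef
  have hKnn : ∀ x y, 0 ≤ K x y := fun x y =>
    div_nonneg (mul_nonneg (by split <;> norm_num)
      (mul_nonneg (Real.rpow_nonneg (norm_nonneg _) _) (Real.rpow_nonneg (norm_nonneg _) _)))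
      (sq_nonneg _)
  have hKm : Measurable (Function.uncurry K) := by
    have hin : Measurable fun p : EuclideanSpace ℝ (Fin 3) × EuclideanSpace ℝ (Fin 3) =>
        ⟪p.1, p.2⟫ := measurable_fst.inner measurable_snd
    have hite : Measurable fun p : EuclideanSpace ℝ (Fin 3) × EuclideanSpace ℝ (Fin 3) =>
        (if a * ‖p.1‖ ≤ ‖p.2‖ then (1:ℝ) else 0) :=
      Measurable.ite (measurableSet_le (by fun_prop) (by fun_prop)) measurable_const
        measurable_const
    have hn1 : Measurable fun p : EuclideanSpace ℝ (Fin 3) × EuclideanSpace ℝ (Fin 3) =>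
        ‖p.1‖ ^ ((1:ℝ)/2) * ‖p.2‖ ^ ((1:ℝ)/2) := by fun_prop
    have hden : Measurable fun p : EuclideanSpace ℝ (Fin 3) × EuclideanSpace ℝ (Fin 3) =>
        (‖p.1‖ ^ 2 + ‖p.2‖ ^ 2 + c * ⟪p.1, p.2⟫) ^ 2 :=
      ((((measurable_norm.comp measurable_fst).pow_const 2).add
        ((measurable_norm.comp measurable_snd).pow_const 2)).add
        (measurable_const.mul hin)).pow_const 2
    exact (hite.mul hn1).div hden
  have hC₁ : 0 ≤ 4 * π * ∫ q in Ioi a, wj c q :=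
    mul_nonneg (by positivity)
      (setIntegral_nonneg measurableSet_Ioi fun q hq => wj_nonneg (le_of_lt (lt_trans ha0 hq)))
  have hC₂ : 0 ≤ 4 * π * ∫ q in (0:ℝ)..(1/a), wj c q :=
    mul_nonneg (by positivity)
      (intervalIntegral.integral_nonneg (by positivity) fun q hq => wj_nonneg hq.1)
  have hrow : ∀ k₁, ∫⁻ k₂, ENNReal.ofReal (K k₁ k₂) ≤
      ENNReal.ofReal (4 * π * ∫ q in Ioi a, wj c q) := fun k₁ =>
    le_trans (lintegral_mono fun k₂ => ENNReal.ofReal_le_ofReal (kernel_le hc0 hc2 k₁ k₂))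
      (row_bound hc0 hc2 ha (norm_nonneg k₁))
  have hcol : ∀ k₂, ∫⁻ k₁, ENNReal.ofReal (K k₁ k₂) ≤
      ENNReal.ofReal (4 * π * ∫ q in (0:ℝ)..(1/a), wj c q) := fun k₂ =>
    le_trans (lintegral_mono fun k₁ => ENNReal.ofReal_le_ofReal (kernel_le hc0 hc2 k₁ k₂))
      (col_bound hc0 hc2 ha (norm_nonneg k₂))
  have main := schur_main volume K hKnn hKm f g hfmeas hgmeas hf hg _ _ hC₁ hC₂ hrow hcol
  simp only [wj] at main
  exact main
end

section
/- Let m > 0. For every η ∈ ℝ³ → ℂ with ∫_{|p| ≥ ε} |p|^{−1} |η̂(p)|² dp < ∞, define (Ĝη)(k₁,k₂) = (η̂(k₁) − η̂(k₂))/(k₁² + k₂² + (2/(m+1)) k₁·k₂). Then ∫∫_{|k₁| ≥ ε, |k₂| ≥ ε} |(Ĝη)(k₁,k₂)|² dk₁ dk₂ ≤ c₂ ∫_{|p| ≥ ε} |p|^{−1} |η̂(p)|² dp, with c₂ = 8 ∫_{ℝ³} (1 + q² − (2/(m+1))q)^{−2} dq. -/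
open MeasureTheory Real
open scoped RealInnerProductSpace ENNReal

noncomputable section

local notation "E3" => EuclideanSpace ℝ (Fin 3)

private lemma pos1' {b r t : ℝ} (hb : 0 < b) (hb2 : b < 2) (hr : 0 < r) (ht : 0 ≤ t) :
    0 < r ^ 2 + t ^ 2 - b * (r * t) := by
  nlinarith [sq_nonneg (r - t), mul_nonneg hr.le ht, mul_pos hr hr]

private lemma pos1 {b t : ℝ} (hb : 0 < b) (hb2 : b < 2) (ht : 0 ≤ t) :
    0 < 1 + t ^ 2 - b * t := by
  have := pos1' hb hb2 one_pos ht; nlinarith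

private lemma g_integrable {b : ℝ} (hb : 0 < b) (hb2 : b < 2) :
    Integrable (fun q : E3 => 1 / (1 + ‖q‖ ^ 2 - b * ‖q‖) ^ 2) := by
  have hcont : Continuous fun q : E3 => 1 / (1 + ‖q‖ ^ 2 - b * ‖q‖) ^ 2 := by
    apply Continuous.div continuous_const (by fun_prop)
    intro q; exact pow_ne_zero _ (ne_of_gt (pos1 hb hb2 (norm_nonneg q)))
  have hint : Integrable (fun q : E3 => ((1 - b / 2)⁻¹ ^ 2 * 4) * (1 + ‖q‖) ^ (-(4 : ℝ))) :=
    (integrable_one_add_norm (by norm_num [finrank_euclideanSpace]) (μ := volume)).const_mul _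
  refine hint.mono' hcont.aestronglyMeasurable (Filter.Eventually.of_forall fun q => ?_)
  set t := ‖q‖ with ht'
  have ht : 0 ≤ t := norm_nonneg q
  have h1 : 0 < 1 + t ^ 2 - b * t := pos1 hb hb2 ht
  have hb' : 0 < 1 - b / 2 := by linarith
  have hrpow : (1 + t) ^ (-(4 : ℝ)) = ((1 + t) ^ (4 : ℕ))⁻¹ := by
    rw [rpow_neg (by positivity), ← rpow_natCast (1 + t) 4]; norm_num
  rw [Real.norm_eq_abs, abs_of_pos (by positivity), hrpow, ← div_eq_mul_inv,
    div_le_div_iff₀ (by positivity) (by positivity)]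
  have hA : (1 - b / 2) * (1 + t ^ 2) ≤ 1 + t ^ 2 - b * t := by nlinarith [sq_nonneg (1 - t)]
  have hB : (1 + t) ^ 2 ≤ 2 * (1 + t ^ 2) := by nlinarith [sq_nonneg (1 - t)]
  have hA2 := pow_le_pow_left₀ (by positivity) hA 2
  have hB2 := pow_le_pow_left₀ (by positivity) hB 2
  have hinv : (1 - b / 2)⁻¹ ^ 2 * ((1 - b / 2) * (1 + t ^ 2)) ^ 2 = (1 + t ^ 2) ^ 2 := by
    rw [show (1 - b / 2)⁻¹ ^ 2 * ((1 - b / 2) * (1 + t ^ 2)) ^ 2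
        = ((1 - b / 2)⁻¹ * (1 - b / 2)) ^ 2 * (1 + t ^ 2) ^ 2 by ring,
      inv_mul_cancel₀ hb'.ne', one_pow, one_mul]
  have h3 := mul_le_mul_of_nonneg_left hA2 (by positivity : (0:ℝ) ≤ (1 - b / 2)⁻¹ ^ 2)
  rw [hinv] at h3
  nlinarith [h3, hB2]

private lemma w_key {b r : ℝ} (hb : 0 < b) (hb2 : b < 2) (hr : 0 < r) :
    ∀ k : E3, 1 / (r ^ 2 + ‖k‖ ^ 2 - b * (r * ‖k‖)) ^ 2
      = (r ^ 4)⁻¹ * (1 / (1 + ‖r⁻¹ • k‖ ^ 2 - b * ‖r⁻¹ • k‖) ^ 2) := by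
  intro k
  have hnrm : ‖r⁻¹ • k‖ = r⁻¹ * ‖k‖ := by
    rw [norm_smul, Real.norm_eq_abs, abs_of_pos (by positivity)]
  rw [hnrm]
  have h1 : 0 < 1 + (r⁻¹ * ‖k‖) ^ 2 - b * (r⁻¹ * ‖k‖) :=
    pos1 hb hb2 (by positivity)
  have h2 : 0 < r ^ 2 + ‖k‖ ^ 2 - b * (r * ‖k‖) := pos1' hb hb2 hr (norm_nonneg k)
  have e : r ^ 2 * (1 + (r⁻¹ * ‖k‖) ^ 2 - b * (r⁻¹ * ‖k‖)) = r ^ 2 + ‖k‖ ^ 2 - b * (r * ‖k‖) := by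
    field_simp
  rw [← e]
  field_simp

private lemma w_integrable {b r : ℝ} (hb : 0 < b) (hb2 : b < 2) (hr : 0 < r) :
    Integrable (fun k : E3 => 1 / (r ^ 2 + ‖k‖ ^ 2 - b * (r * ‖k‖)) ^ 2) := by
  have := ((integrable_comp_smul_iff volume
      (fun q : E3 => 1 / (1 + ‖q‖ ^ 2 - b * ‖q‖) ^ 2)
      (inv_ne_zero hr.ne')).2 (g_integrable hb hb2)).const_mul (r ^ 4)⁻¹
  exact this.congr (Filter.Eventually.of_forall fun k => (w_key hb hb2 hr k).symm)

private lemma w_integral {b r : ℝ} (hb : 0 < b) (hb2 : b < 2) (hr : 0 < r) :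
    ∫ k : E3, 1 / (r ^ 2 + ‖k‖ ^ 2 - b * (r * ‖k‖)) ^ 2
      = r⁻¹ * ∫ q : E3, 1 / (1 + ‖q‖ ^ 2 - b * ‖q‖) ^ 2 := by
  rw [integral_congr_ae (Filter.Eventually.of_forall (w_key hb hb2 hr)),
    integral_const_mul, Measure.integral_comp_inv_smul volume
      (fun q : E3 => 1 / (1 + ‖q‖ ^ 2 - b * ‖q‖) ^ 2) r]
  rw [finrank_euclideanSpace, smul_eq_mul]
  simp only [Fintype.card_fin]
  rw [abs_of_pos (by positivity), ← mul_assoc]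
  congr 1
  field_simp

end

set_option maxHeartbeats 1000000 in
theorem stmt15 (m ε : ℝ) (hm : 0 < m) (hε : 0 < ε)
    (η : EuclideanSpace ℝ (Fin 3) → ℂ) (hηmeas : Measurable η)
    (hfin :
      IntegrableOn (fun p : EuclideanSpace ℝ (Fin 3) => ‖p‖⁻¹ * ‖η p‖ ^ 2)
        {p : EuclideanSpace ℝ (Fin 3) | ε ≤ ‖p‖}) :
    (∫ k₁ in {k : EuclideanSpace ℝ (Fin 3) | ε ≤ ‖k‖},
        ∫ k₂ in {k : EuclideanSpace ℝ (Fin 3) | ε ≤ ‖k‖},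
          ‖(η k₁ - η k₂) /
              ((‖k₁‖ ^ 2 + ‖k₂‖ ^ 2 + (2 / (m + 1)) * ⟪k₁, k₂⟫ : ℝ) : ℂ)‖ ^ 2) ≤
      (8 * ∫ q : EuclideanSpace ℝ (Fin 3),
          (1 / (1 + ‖q‖ ^ 2 - (2 / (m + 1)) * ‖q‖) ^ 2)) *
        ∫ p in {p : EuclideanSpace ℝ (Fin 3) | ε ≤ ‖p‖}, ‖p‖⁻¹ * ‖η p‖ ^ 2 := by
  have hb : 0 < 2 / (m + 1) := by positivity
  have hb2 : 2 / (m + 1) < 2 := by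
    rw [div_lt_iff₀ (by linarith)]; nlinarith
  obtain ⟨b, hbdef⟩ : ∃ b : ℝ, b = 2 / (m + 1) := ⟨_, rfl⟩
  rw [← hbdef] at hb hb2 ⊢
  obtain ⟨S, hSdef⟩ : ∃ S : Set (EuclideanSpace ℝ (Fin 3)),
      S = {k : EuclideanSpace ℝ (Fin 3) | ε ≤ ‖k‖} := ⟨_, rfl⟩
  rw [← hSdef] at hfin ⊢
  have hS : MeasurableSet S := by
    rw [hSdef]; exact measurableSet_le measurable_const measurable_norm
  obtain ⟨C, hCdef⟩ : ∃ C : ℝ,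
      C = ∫ q : EuclideanSpace ℝ (Fin 3), (1 / (1 + ‖q‖ ^ 2 - b * ‖q‖) ^ 2) := ⟨_, rfl⟩
  rw [← hCdef]
  obtain ⟨I, hIdef⟩ : ∃ I : ℝ,
      I = ∫ p in S, ‖p‖⁻¹ * ‖η p‖ ^ 2 := ⟨_, rfl⟩
  rw [← hIdef]
  have hC0 : 0 ≤ C := by rw [hCdef]; exact integral_nonneg fun q => by positivity
  have hI0 : 0 ≤ I := by rw [hIdef]; exact setIntegral_nonneg hS fun p _ => by positivity
  obtain ⟨F, hFdef⟩ : ∃ F : EuclideanSpace ℝ (Fin 3) → EuclideanSpace ℝ (Fin 3) → ℝ,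
      F = fun k₁ k₂ =>
        ‖(η k₁ - η k₂) / ((‖k₁‖ ^ 2 + ‖k₂‖ ^ 2 + b * ⟪k₁, k₂⟫ : ℝ) : ℂ)‖ ^ 2 := ⟨_, rfl⟩
  obtain ⟨w, hwdef⟩ : ∃ w : EuclideanSpace ℝ (Fin 3) → EuclideanSpace ℝ (Fin 3) → ℝ,
      w = fun k₁ k₂ =>
        1 / (‖k₁‖ ^ 2 + ‖k₂‖ ^ 2 - b * (‖k₁‖ * ‖k₂‖)) ^ 2 := ⟨_, rfl⟩
  -- measurability
  have hwmeas : Measurable (fun p : EuclideanSpace ℝ (Fin 3) × EuclideanSpace ℝ (Fin 3) =>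
      w p.1 p.2) := by
    simp only [hwdef]
    fun_prop
  have hFmeas : Measurable (fun p : EuclideanSpace ℝ (Fin 3) × EuclideanSpace ℝ (Fin 3) =>
      F p.1 p.2) := by
    simp only [hFdef]
    apply Measurable.pow _ measurable_const
    apply Measurable.norm
    apply Measurable.div
    · exact (hηmeas.comp measurable_fst).sub (hηmeas.comp measurable_snd)
    · apply Complex.measurable_ofReal.comp
      have hinner : Measurable (fun p : EuclideanSpace ℝ (Fin 3) × EuclideanSpace ℝ (Fin 3) =>
          (⟪p.1, p.2⟫ : ℝ)) := (continuous_fst.inner continuous_snd).measurable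
      fun_prop
  have hFnn : ∀ k₁ k₂, 0 ≤ F k₁ k₂ := fun k₁ k₂ => by simp only [hFdef]; positivity
  have hwnn : ∀ k₁ k₂, 0 ≤ w k₁ k₂ := fun k₁ k₂ => by simp only [hwdef]; positivity
  -- pointwise bound
  have hpt : ∀ k₁ ∈ S, ∀ k₂ ∈ S,
      F k₁ k₂ ≤ (2 * ‖η k₁‖ ^ 2 + 2 * ‖η k₂‖ ^ 2) * w k₁ k₂ := by
    intro k₁ hk₁ k₂ hk₂
    rw [hSdef] at hk₁ hk₂
    have hx : 0 < ‖k₁‖ := lt_of_lt_of_le hε hk₁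
    have hy : 0 < ‖k₂‖ := lt_of_lt_of_le hε hk₂
    have hE : 0 < ‖k₁‖ ^ 2 + ‖k₂‖ ^ 2 - b * (‖k₁‖ * ‖k₂‖) := pos1' hb hb2 hx (norm_nonneg _)
    have hED : ‖k₁‖ ^ 2 + ‖k₂‖ ^ 2 - b * (‖k₁‖ * ‖k₂‖)
        ≤ ‖k₁‖ ^ 2 + ‖k₂‖ ^ 2 + b * ⟪k₁, k₂⟫ := by
      have h := (abs_le.1 (abs_real_inner_le_norm k₁ k₂)).1
      nlinarith [mul_le_mul_of_nonneg_left h hb.le]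
    have hD : 0 < ‖k₁‖ ^ 2 + ‖k₂‖ ^ 2 + b * ⟪k₁, k₂⟫ := lt_of_lt_of_le hE hED
    have hFeq : F k₁ k₂
        = ‖η k₁ - η k₂‖ ^ 2 / (‖k₁‖ ^ 2 + ‖k₂‖ ^ 2 + b * ⟪k₁, k₂⟫) ^ 2 := by
      simp only [hFdef]
      rw [norm_div, div_pow]; simp only [Complex.norm_real, Real.norm_eq_abs, sq_abs]
    have hnum : ‖η k₁ - η k₂‖ ^ 2 ≤ 2 * ‖η k₁‖ ^ 2 + 2 * ‖η k₂‖ ^ 2 := by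
      have h := norm_sub_le (η k₁) (η k₂)
      nlinarith [norm_nonneg (η k₁), norm_nonneg (η k₂), sq_nonneg (‖η k₁‖ - ‖η k₂‖),
        norm_nonneg (η k₁ - η k₂)]
    have hsq : (‖k₁‖ ^ 2 + ‖k₂‖ ^ 2 - b * (‖k₁‖ * ‖k₂‖)) ^ 2
        ≤ (‖k₁‖ ^ 2 + ‖k₂‖ ^ 2 + b * ⟪k₁, k₂⟫) ^ 2 := pow_le_pow_left₀ hE.le hED 2
    rw [hFeq]
    calc ‖η k₁ - η k₂‖ ^ 2 / (‖k₁‖ ^ 2 + ‖k₂‖ ^ 2 + b * ⟪k₁, k₂⟫) ^ 2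
        ≤ (2 * ‖η k₁‖ ^ 2 + 2 * ‖η k₂‖ ^ 2)
          / (‖k₁‖ ^ 2 + ‖k₂‖ ^ 2 - b * (‖k₁‖ * ‖k₂‖)) ^ 2 :=
          div_le_div₀ (by positivity) hnum (by positivity) hsq
      _ = (2 * ‖η k₁‖ ^ 2 + 2 * ‖η k₂‖ ^ 2) * w k₁ k₂ := by
          simp only [hwdef]; ring
  -- inner w lintegral bound
  have hwint : ∀ k₁ ∈ S,
      (∫⁻ k₂ in S, ENNReal.ofReal (w k₁ k₂)) ≤ ENNReal.ofReal (C * ‖k₁‖⁻¹) := by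
    intro k₁ hk₁
    rw [hSdef] at hk₁
    have hr : 0 < ‖k₁‖ := lt_of_lt_of_le hε hk₁
    calc (∫⁻ k₂ in S, ENNReal.ofReal (w k₁ k₂))
        ≤ ∫⁻ k₂, ENNReal.ofReal (w k₁ k₂) := setLIntegral_le_lintegral S _
      _ = ENNReal.ofReal (∫ k₂, w k₁ k₂) := by
          rw [← ofReal_integral_eq_lintegral_ofReal
            ((w_integrable hb hb2 hr).congr
              (Filter.Eventually.of_forall fun k₂ => by simp only [hwdef]))
            (Filter.Eventually.of_forall fun k₂ => hwnn k₁ k₂)]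
      _ = ENNReal.ofReal (C * ‖k₁‖⁻¹) := by
          rw [show (∫ k₂, w k₁ k₂) = ∫ k₂ : EuclideanSpace ℝ (Fin 3),
              1 / (‖k₁‖ ^ 2 + ‖k₂‖ ^ 2 - b * (‖k₁‖ * ‖k₂‖)) ^ 2 from
              integral_congr_ae (Filter.Eventually.of_forall fun k₂ => by simp only [hwdef]),
            w_integral hb hb2 hr, ← hCdef, mul_comm]
  -- symmetry of w
  have hwsymm : ∀ k₁ k₂, w k₁ k₂ = w k₂ k₁ := by
    intro k₁ k₂; simp only [hwdef]; ring_nf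
  -- measurable auxiliary functions
  have hWmeas : Measurable (fun p : EuclideanSpace ℝ (Fin 3) × EuclideanSpace ℝ (Fin 3) =>
      ENNReal.ofReal (w p.1 p.2)) := ENNReal.measurable_ofReal.comp hwmeas
  have hPmeas : Measurable (fun k : EuclideanSpace ℝ (Fin 3) =>
      ENNReal.ofReal (2 * ‖η k‖ ^ 2)) := by
    apply ENNReal.measurable_ofReal.comp; fun_prop
  obtain ⟨A, hAdef⟩ : ∃ A : EuclideanSpace ℝ (Fin 3) → ℝ≥0∞,
      A = fun k₁ => ∫⁻ k₂ in S, ENNReal.ofReal (F k₁ k₂) := ⟨_, rfl⟩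
  have hAmeas : Measurable A := by
    rw [hAdef]
    exact Measurable.lintegral_prod_right (f := fun k₁ k₂ => ENNReal.ofReal (F k₁ k₂))
      (ENNReal.measurable_ofReal.comp hFmeas)
  -- first term bound
  have hT1 : (∫⁻ k₁ in S, ENNReal.ofReal (2 * ‖η k₁‖ ^ 2) * ENNReal.ofReal (C * ‖k₁‖⁻¹))
      ≤ ENNReal.ofReal (2 * C * I) := by
    refine le_of_eq ?_
    have he : ∀ k₁ : EuclideanSpace ℝ (Fin 3),
        ENNReal.ofReal (2 * ‖η k₁‖ ^ 2) * ENNReal.ofReal (C * ‖k₁‖⁻¹)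
          = ENNReal.ofReal (2 * C) * ENNReal.ofReal (‖k₁‖⁻¹ * ‖η k₁‖ ^ 2) := by
      intro k₁
      rw [← ENNReal.ofReal_mul (by positivity), ← ENNReal.ofReal_mul (by positivity)]
      congr 1
      ring
    calc (∫⁻ k₁ in S, ENNReal.ofReal (2 * ‖η k₁‖ ^ 2) * ENNReal.ofReal (C * ‖k₁‖⁻¹))
        = ∫⁻ k₁ in S, ENNReal.ofReal (2 * C) * ENNReal.ofReal (‖k₁‖⁻¹ * ‖η k₁‖ ^ 2) :=
          lintegral_congr fun k₁ => he k₁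
      _ = ENNReal.ofReal (2 * C) * ∫⁻ k₁ in S, ENNReal.ofReal (‖k₁‖⁻¹ * ‖η k₁‖ ^ 2) := by
          apply lintegral_const_mul
          apply ENNReal.measurable_ofReal.comp
          fun_prop
      _ = ENNReal.ofReal (2 * C) * ENNReal.ofReal I := by
          rw [← ofReal_integral_eq_lintegral_ofReal hfin
            (Filter.Eventually.of_forall fun p => by positivity), ← hIdef]
      _ = ENNReal.ofReal (2 * C * I) := by
          rw [← ENNReal.ofReal_mul (by positivity)]
  -- main lintegral bound
  have hmain : (∫⁻ k₁ in S, A k₁) ≤ ENNReal.ofReal (8 * C * I) := by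
    have hmeas1 : Measurable (fun k₁ : EuclideanSpace ℝ (Fin 3) =>
        ENNReal.ofReal (2 * ‖η k₁‖ ^ 2) * ENNReal.ofReal (C * ‖k₁‖⁻¹)) := by
      apply hPmeas.mul
      apply ENNReal.measurable_ofReal.comp
      fun_prop
    have h1 : (∫⁻ k₁ in S, A k₁) ≤
        (∫⁻ k₁ in S, ENNReal.ofReal (2 * ‖η k₁‖ ^ 2) * ENNReal.ofReal (C * ‖k₁‖⁻¹))
        + ∫⁻ k₁ in S, ∫⁻ k₂ in S, ENNReal.ofReal (2 * ‖η k₂‖ ^ 2) * ENNReal.ofReal (w k₁ k₂) := by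
      rw [← lintegral_add_left hmeas1]
      refine lintegral_mono_ae ((ae_restrict_mem hS).mono fun k₁ hk₁ => ?_)
      have hmeasW1 : Measurable (fun k₂ : EuclideanSpace ℝ (Fin 3) =>
          ENNReal.ofReal (w k₁ k₂)) := hWmeas.comp (measurable_const.prodMk measurable_id)
      rw [hAdef]
      calc (∫⁻ k₂ in S, ENNReal.ofReal (F k₁ k₂)) ≤ ∫⁻ k₂ in S,
            (ENNReal.ofReal (2 * ‖η k₁‖ ^ 2) + ENNReal.ofReal (2 * ‖η k₂‖ ^ 2))
              * ENNReal.ofReal (w k₁ k₂) := by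
            refine lintegral_mono_ae ((ae_restrict_mem hS).mono fun k₂ hk₂ => ?_)
            calc ENNReal.ofReal (F k₁ k₂)
                ≤ ENNReal.ofReal ((2 * ‖η k₁‖ ^ 2 + 2 * ‖η k₂‖ ^ 2) * w k₁ k₂) :=
                  ENNReal.ofReal_le_ofReal (hpt k₁ hk₁ k₂ hk₂)
              _ = (ENNReal.ofReal (2 * ‖η k₁‖ ^ 2) + ENNReal.ofReal (2 * ‖η k₂‖ ^ 2))
                  * ENNReal.ofReal (w k₁ k₂) := by
                  rw [ENNReal.ofReal_mul (by positivity),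
                    ENNReal.ofReal_add (by positivity) (by positivity)]
        _ = (∫⁻ k₂ in S, ENNReal.ofReal (2 * ‖η k₁‖ ^ 2) * ENNReal.ofReal (w k₁ k₂))
            + ∫⁻ k₂ in S, ENNReal.ofReal (2 * ‖η k₂‖ ^ 2) * ENNReal.ofReal (w k₁ k₂) := by
            rw [← lintegral_add_left (hmeasW1.const_mul _)]
            exact lintegral_congr fun k₂ => add_mul _ _ _
        _ = ENNReal.ofReal (2 * ‖η k₁‖ ^ 2) * (∫⁻ k₂ in S, ENNReal.ofReal (w k₁ k₂))
            + ∫⁻ k₂ in S, ENNReal.ofReal (2 * ‖η k₂‖ ^ 2) * ENNReal.ofReal (w k₁ k₂) := by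
            rw [lintegral_const_mul _ hmeasW1]
        _ ≤ ENNReal.ofReal (2 * ‖η k₁‖ ^ 2) * ENNReal.ofReal (C * ‖k₁‖⁻¹)
            + ∫⁻ k₂ in S, ENNReal.ofReal (2 * ‖η k₂‖ ^ 2) * ENNReal.ofReal (w k₁ k₂) :=
            add_le_add (mul_le_mul_right (hwint k₁ hk₁) _) le_rfl
    have hswap : (∫⁻ k₁ in S, ∫⁻ k₂ in S,
          ENNReal.ofReal (2 * ‖η k₂‖ ^ 2) * ENNReal.ofReal (w k₁ k₂))
        = ∫⁻ k₂ in S, ∫⁻ k₁ in S,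
          ENNReal.ofReal (2 * ‖η k₂‖ ^ 2) * ENNReal.ofReal (w k₁ k₂) := by
      exact lintegral_lintegral_swap
        (Measurable.aemeasurable ((hPmeas.comp measurable_snd).mul hWmeas))
    have hT2 : (∫⁻ k₁ in S, ∫⁻ k₂ in S,
          ENNReal.ofReal (2 * ‖η k₂‖ ^ 2) * ENNReal.ofReal (w k₁ k₂))
        ≤ ENNReal.ofReal (2 * C * I) := by
      rw [hswap]
      refine le_trans (lintegral_mono_ae
        ((ae_restrict_mem hS).mono fun k₂ hk₂ => ?_)) hT1
      have hmeasW2 : Measurable (fun k₁ : EuclideanSpace ℝ (Fin 3) =>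
          ENNReal.ofReal (w k₁ k₂)) := hWmeas.comp (measurable_id.prodMk measurable_const)
      calc (∫⁻ k₁ in S, ENNReal.ofReal (2 * ‖η k₂‖ ^ 2) * ENNReal.ofReal (w k₁ k₂))
          = ENNReal.ofReal (2 * ‖η k₂‖ ^ 2) * ∫⁻ k₁ in S, ENNReal.ofReal (w k₁ k₂) := by
            rw [lintegral_const_mul _ hmeasW2]
        _ = ENNReal.ofReal (2 * ‖η k₂‖ ^ 2) * ∫⁻ k₁ in S, ENNReal.ofReal (w k₂ k₁) := by
            congr 1
            exact lintegral_congr fun k₁ => by rw [hwsymm k₁ k₂]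
        _ ≤ ENNReal.ofReal (2 * ‖η k₂‖ ^ 2) * ENNReal.ofReal (C * ‖k₂‖⁻¹) :=
            mul_le_mul_right (hwint k₂ hk₂) _
    have hsum : ENNReal.ofReal (2 * C * I) + ENNReal.ofReal (2 * C * I)
        ≤ ENNReal.ofReal (8 * C * I) := by
      have h2 : (0:ℝ) ≤ 2 * C * I := mul_nonneg (mul_nonneg (by norm_num) hC0) hI0
      rw [← ENNReal.ofReal_add h2 h2]
      apply ENNReal.ofReal_le_ofReal
      nlinarith [mul_nonneg hC0 hI0]
    exact le_trans h1 (le_trans (add_le_add hT1 hT2) hsum)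
  -- back to Bochner integrals
  have hinner : ∀ k₁ : EuclideanSpace ℝ (Fin 3), (∫ k₂ in S, F k₁ k₂) = (A k₁).toReal := by
    intro k₁
    rw [hAdef]
    exact integral_eq_lintegral_of_nonneg_ae (Filter.Eventually.of_forall fun k₂ => hFnn k₁ k₂)
      ((hFmeas.comp (measurable_const.prodMk measurable_id)).aestronglyMeasurable)
  have hLHS : (∫ k₁ in S, ∫ k₂ in S, F k₁ k₂)
      = (∫⁻ k₁ in S, ENNReal.ofReal ((A k₁).toReal)).toReal := by
    simp only [hinner]
    exact integral_eq_lintegral_of_nonneg_ae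
      (Filter.Eventually.of_forall fun k₁ => ENNReal.toReal_nonneg)
      hAmeas.ennreal_toReal.aestronglyMeasurable
  have hfinal : (∫ k₁ in S, ∫ k₂ in S, F k₁ k₂) ≤ 8 * C * I := by
    rw [hLHS]
    have h2 : (∫⁻ k₁ in S, ENNReal.ofReal ((A k₁).toReal)) ≤ ENNReal.ofReal (8 * C * I) :=
      le_trans (lintegral_mono fun k₁ => ENNReal.ofReal_toReal_le) hmain
    calc (∫⁻ k₁ in S, ENNReal.ofReal ((A k₁).toReal)).toReal
        ≤ (ENNReal.ofReal (8 * C * I)).toReal :=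
          ENNReal.toReal_mono ENNReal.ofReal_ne_top h2
      _ = 8 * C * I := ENNReal.toReal_ofReal
          (mul_nonneg (mul_nonneg (by norm_num) hC0) hI0)
  have hgoal := hfinal
  simp only [hFdef] at hgoal
  exact hgoal
end

section
/- Let m > 0 and λ > 0. For η with ‖η‖²_{H^{−1/2}_λ} := ∫_{ℝ³} |η̂(k)|²/√(k²+λ) dk < ∞, define (Ĝ_λ η)(k₁,k₂) = (η̂(k₁) − η̂(k₂))/(k₁² + k₂² + (2/(m+1)) k₁·k₂ + λ). Then there exist constants 0 < c₁ ≤ c₂ < ∞, independent of λ, such that c₁ ‖η‖²_{H^{−1/2}_λ} ≤ ‖G_λ η‖²_{L²(ℝ⁶)} ≤ c₂ ‖η‖²_{H^{−1/2}_λ}. -/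
open MeasureTheory Real Metric
open scoped RealInnerProductSpace ENNReal

noncomputable section

local notation "E3" => EuclideanSpace ℝ (Fin 3)

lemma finrank_E3 : Module.finrank ℝ (EuclideanSpace ℝ (Fin 3)) = 3 :=
  finrank_euclideanSpace_fin

/-- scaling of lintegral under dilation -/
lemma lintegral_scale (ψ : E3 → ℝ≥0∞) (hψ : Measurable ψ) {R : ℝ} (hR : 0 < R) :
    ∫⁻ q : E3, ψ (R⁻¹ • q) = ENNReal.ofReal (R ^ 3) * ∫⁻ u : E3, ψ u := by
  have hmap := Measure.map_addHaar_smul (volume : Measure E3) (r := R⁻¹)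
    (inv_ne_zero hR.ne')
  have h1 : Measurable fun q : E3 => R⁻¹ • q := measurable_const_smul _
  calc ∫⁻ q : E3, ψ (R⁻¹ • q) = ∫⁻ u, ψ u ∂(Measure.map (R⁻¹ • ·) volume) :=
        (lintegral_map hψ h1).symm
    _ = ENNReal.ofReal (R ^ 3) * ∫⁻ u : E3, ψ u := by
        rw [hmap, lintegral_smul_measure]
        congr 1
        rw [finrank_E3]
        rw [abs_of_pos (by positivity)]
        congr 1
        field_simp

lemma master (χ : E3 → ℝ≥0∞) (hχ : Measurable χ) {L : ℝ} (hL : 0 < L) :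
    ∫⁻ q : E3, χ (L⁻¹ • q) * ENNReal.ofReal (((‖q‖ ^ 2 + L ^ 2) ^ 2)⁻¹)
      = (ENNReal.ofReal L)⁻¹ * ∫⁻ u : E3, χ u * ENNReal.ofReal (((‖u‖ ^ 2 + 1) ^ 2)⁻¹) := by
  set Ψ : E3 → ℝ≥0∞ := fun u => χ u * ENNReal.ofReal (((‖u‖ ^ 2 + 1) ^ 2)⁻¹) with hΨ
  have hΨm : Measurable Ψ := hχ.mul (by fun_prop)
  have key : ∀ q : E3, χ (L⁻¹ • q) * ENNReal.ofReal (((‖q‖ ^ 2 + L ^ 2) ^ 2)⁻¹)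
      = ENNReal.ofReal ((L ^ 4)⁻¹) * Ψ (L⁻¹ • q) := by
    intro q
    have hnq : ‖(L⁻¹ • q : E3)‖ = L⁻¹ * ‖q‖ := by
      rw [norm_smul, norm_inv, Real.norm_eq_abs, abs_of_pos hL]
    have hq2 : (0:ℝ) ≤ ‖q‖ := norm_nonneg _
    have hval : ((‖(L⁻¹ • q : E3)‖ ^ 2 + 1) ^ 2)⁻¹
        = L ^ 4 * ((‖q‖ ^ 2 + L ^ 2) ^ 2)⁻¹ := by
      rw [hnq]
      have h1 : (L⁻¹ * ‖q‖) ^ 2 + 1 = (‖q‖ ^ 2 + L ^ 2) / L ^ 2 := by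
        field_simp
      rw [h1]
      have h2 : (0:ℝ) < ‖q‖ ^ 2 + L ^ 2 := by positivity
      rw [div_pow]
      rw [inv_div]
      field_simp
    simp only [hΨ]
    rw [hval, ← mul_assoc, mul_comm (ENNReal.ofReal ((L ^ 4)⁻¹)) (χ _), mul_assoc,
      ← ENNReal.ofReal_mul (by positivity)]
    congr 2
    rw [← mul_assoc, inv_mul_cancel₀ (by positivity : (L:ℝ) ^ 4 ≠ 0), one_mul]
  calc ∫⁻ q : E3, χ (L⁻¹ • q) * ENNReal.ofReal (((‖q‖ ^ 2 + L ^ 2) ^ 2)⁻¹)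
      = ∫⁻ q : E3, ENNReal.ofReal ((L ^ 4)⁻¹) * Ψ (L⁻¹ • q) := by
        exact lintegral_congr key
    _ = ENNReal.ofReal ((L ^ 4)⁻¹) * ∫⁻ q : E3, Ψ (L⁻¹ • q) :=
        lintegral_const_mul' _ _ ENNReal.ofReal_ne_top
    _ = ENNReal.ofReal ((L ^ 4)⁻¹) * (ENNReal.ofReal (L ^ 3) * ∫⁻ u, Ψ u) := by
        rw [lintegral_scale Ψ hΨm hL]
    _ = (ENNReal.ofReal L)⁻¹ * ∫⁻ u, Ψ u := by
        rw [← mul_assoc, ← ENNReal.ofReal_mul (by positivity),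
          ← ENNReal.ofReal_inv_of_pos hL]
        congr 2
        field_simp



def profC0 : ℝ≥0∞ := ∫⁻ u : E3, ENNReal.ofReal (((‖u‖ ^ 2 + 1) ^ 2)⁻¹)

def profC1 : ℝ≥0∞ :=
  ∫⁻ u : E3, (if 3 ≤ ‖u‖ then 1 else 0) * ENNReal.ofReal (((‖u‖ ^ 2 + 1) ^ 2)⁻¹)

def profC2 : ℝ≥0∞ :=
  ∫⁻ u : E3, (if ‖u‖ ≤ 1 / 3 then 1 else 0) * ENNReal.ofReal (((‖u‖ ^ 2 + 1) ^ 2)⁻¹)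

def ballV : ℝ≥0∞ := volume (ball (0 : E3) 1)

lemma ballV_pos : 0 < ballV := measure_ball_pos _ _ one_pos

lemma ballV_ne_top : ballV ≠ ∞ := measure_ball_lt_top.ne

lemma profC0_lt_top : profC0 < ∞ := by
  have hb : ∀ u : E3, ENNReal.ofReal (((‖u‖ ^ 2 + 1) ^ 2)⁻¹)
      ≤ ENNReal.ofReal 4 * ENNReal.ofReal ((1 + ‖u‖) ^ (-4 : ℝ)) := by
    intro u
    rw [← ENNReal.ofReal_mul (by norm_num)]
    apply ENNReal.ofReal_le_ofReal
    have h0 : (0:ℝ) ≤ ‖u‖ := norm_nonneg _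
    have h1 : (0:ℝ) < 1 + ‖u‖ := by linarith
    rw [Real.rpow_neg h1.le]
    rw [show (4:ℝ) = ((4:ℕ):ℝ) by norm_num, Real.rpow_natCast]
    have h2 : (1 + ‖u‖) ^ (4:ℕ) ≤ 4 * (‖u‖ ^ 2 + 1) ^ 2 := by nlinarith [sq_nonneg (1 - ‖u‖), sq_nonneg ‖u‖, sq_nonneg (‖u‖^2 - 1)]
    have h3 : (0:ℝ) < (‖u‖ ^ 2 + 1) ^ 2 := by positivity
    have h4 : (0:ℝ) < (1 + ‖u‖) ^ (4:ℕ) := by positivity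
    rw [← div_eq_mul_inv, le_div_iff₀ h4, inv_mul_eq_div, div_le_iff₀ h3]
    push_cast
    linarith
  calc profC0 ≤ ∫⁻ u : E3, ENNReal.ofReal 4 * ENNReal.ofReal ((1 + ‖u‖) ^ (-4 : ℝ)) :=
        lintegral_mono hb
    _ = ENNReal.ofReal 4 * ∫⁻ u : E3, ENNReal.ofReal ((1 + ‖u‖) ^ (-4 : ℝ)) :=
        lintegral_const_mul' _ _ ENNReal.ofReal_ne_top
    _ < ∞ := by
        apply ENNReal.mul_lt_top ENNReal.ofReal_lt_top
        apply finite_integral_one_add_norm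
        rw [finrank_euclideanSpace_fin]
        norm_num

lemma profC2_le : profC2 ≤ ENNReal.ofReal (1 / 27) * ballV := by
  have hb : ∀ u : E3, (if ‖u‖ ≤ 1 / 3 then 1 else 0) * ENNReal.ofReal (((‖u‖ ^ 2 + 1) ^ 2)⁻¹)
      ≤ (closedBall (0 : E3) (1 / 3)).indicator (fun _ => 1) u := by
    intro u
    by_cases h : ‖u‖ ≤ 1 / 3
    · have hmem : u ∈ closedBall (0 : E3) (1 / 3) := by
        simpa [dist_eq_norm] using h
      rw [Set.indicator_of_mem hmem, if_pos h, one_mul]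
      apply ENNReal.ofReal_le_one.2
      rw [inv_le_one₀ (by positivity)]
      nlinarith [norm_nonneg u, sq_nonneg ‖u‖]
    · have hmem : u ∉ closedBall (0 : E3) (1 / 3) := by
        simpa [dist_eq_norm] using h
      rw [Set.indicator_of_notMem hmem, if_neg h, zero_mul]
  calc profC2 ≤ ∫⁻ u : E3, (closedBall (0 : E3) (1 / 3)).indicator (fun _ => 1) u :=
        lintegral_mono hb
    _ = volume (closedBall (0 : E3) (1 / 3)) := by
        rw [lintegral_indicator measurableSet_closedBall]
        simp
    _ = ENNReal.ofReal ((1/3) ^ 3) * ballV := by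
        rw [Measure.addHaar_closedBall _ _ (by norm_num : (0:ℝ) ≤ 1/3)]
        rw [finrank_euclideanSpace_fin]
        rfl
    _ = ENNReal.ofReal (1 / 27) * ballV := by norm_num

lemma profC1_ge : ENNReal.ofReal (189 / 1369) * ballV ≤ profC1 := by
  set A : Set E3 := closedBall (0 : E3) 6 \ ball (0 : E3) 3 with hA
  have hb : ∀ u : E3, A.indicator (fun _ => ENNReal.ofReal (1369)⁻¹) u
      ≤ (if 3 ≤ ‖u‖ then 1 else 0) * ENNReal.ofReal (((‖u‖ ^ 2 + 1) ^ 2)⁻¹) := by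
    intro u
    by_cases h : u ∈ A
    · obtain ⟨h6, h3⟩ := id h
      simp only [mem_closedBall, dist_eq_norm, sub_zero] at h6
      simp only [mem_ball, dist_eq_norm, sub_zero, not_lt] at h3
      rw [Set.indicator_of_mem h, if_pos (by simpa using h3), one_mul]
      apply ENNReal.ofReal_le_ofReal
      rw [inv_le_inv₀ (by norm_num) (by positivity)]
      have hu2 : ‖u‖ ^ 2 ≤ 36 := by nlinarith [norm_nonneg u]
      nlinarith [norm_nonneg u]
    · rw [Set.indicator_of_notMem h]
      exact zero_le
  have hAvol : volume A = ENNReal.ofReal 189 * ballV := by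
    rw [hA, measure_diff (by
        intro x hx
        exact mem_closedBall.2 (le_trans (mem_ball.1 hx).le (by norm_num)))
      measurableSet_ball.nullMeasurableSet measure_ball_lt_top.ne]
    rw [Measure.addHaar_closedBall _ _ (by norm_num : (0:ℝ) ≤ 6),
      Measure.addHaar_ball _ _ (by norm_num : (0:ℝ) ≤ 3)]
    rw [finrank_euclideanSpace_fin]
    have h216 : ((6:ℝ) ^ 3) = 189 + 27 := by norm_num
    rw [show volume (ball (0:E3) 1) = ballV from rfl]
    rw [show ((3:ℝ) ^ 3) = 27 by norm_num]
    rw [h216, ENNReal.ofReal_add (by norm_num) (by norm_num), add_mul]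
    rw [ENNReal.add_sub_cancel_right (ENNReal.mul_ne_top ENNReal.ofReal_ne_top ballV_ne_top)]
  calc ENNReal.ofReal (189 / 1369) * ballV
      = ENNReal.ofReal (1369)⁻¹ * (ENNReal.ofReal 189 * ballV) := by
        rw [← mul_assoc, ← ENNReal.ofReal_mul (by norm_num)]
        norm_num
    _ = ENNReal.ofReal (1369)⁻¹ * volume A := by rw [hAvol]
    _ = ∫⁻ u : E3, A.indicator (fun _ => ENNReal.ofReal (1369)⁻¹) u := by
        rw [lintegral_indicator (measurableSet_closedBall.diff measurableSet_ball)]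
        simp [mul_comm, hA]
    _ ≤ profC1 := lintegral_mono hb


lemma profC1_le_profC0 : profC1 ≤ profC0 := by
  apply lintegral_mono
  intro u
  by_cases h : 3 ≤ ‖u‖ <;> simp [h]

lemma diag0 {L : ℝ} (hL : 0 < L) :
    ∫⁻ q : E3, ENNReal.ofReal (((‖q‖ ^ 2 + L ^ 2) ^ 2)⁻¹)
      = (ENNReal.ofReal L)⁻¹ * profC0 := by
  have h := master (fun _ => 1) measurable_const hL
  simp only [one_mul] at h
  exact h

lemma diag1 {L : ℝ} (hL : 0 < L) :
    ∫⁻ q : E3, (if 3 * L ≤ ‖q‖ then ENNReal.ofReal (((‖q‖ ^ 2 + L ^ 2) ^ 2)⁻¹) else 0)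
      = (ENNReal.ofReal L)⁻¹ * profC1 := by
  have hχ : Measurable (fun u : E3 => if 3 ≤ ‖u‖ then (1 : ℝ≥0∞) else 0) :=
    Measurable.ite (measurableSet_le measurable_const measurable_norm)
      measurable_const measurable_const
  have h := master (fun u => if 3 ≤ ‖u‖ then 1 else 0) hχ hL
  beta_reduce at h
  unfold profC1
  rw [← h]
  apply lintegral_congr
  intro q
  have hnq : ‖(L⁻¹ • q : E3)‖ = ‖q‖ / L := by
    rw [norm_smul, norm_inv, Real.norm_eq_abs, abs_of_pos hL, inv_mul_eq_div]
  simp only [hnq, ite_mul, one_mul, zero_mul]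
  refine if_congr ?_ rfl rfl
  rw [le_div_iff₀ hL]

lemma diag2 {L : ℝ} (hL : 0 < L) :
    ∫⁻ q : E3, (if ‖q‖ ≤ L / 3 then ENNReal.ofReal (((‖q‖ ^ 2 + L ^ 2) ^ 2)⁻¹) else 0)
      = (ENNReal.ofReal L)⁻¹ * profC2 := by
  have hχ : Measurable (fun u : E3 => if ‖u‖ ≤ 1 / 3 then (1 : ℝ≥0∞) else 0) :=
    Measurable.ite (measurableSet_le measurable_norm measurable_const)
      measurable_const measurable_const
  have h := master (fun u => if ‖u‖ ≤ 1 / 3 then 1 else 0) hχ hL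
  beta_reduce at h
  unfold profC2
  rw [← h]
  apply lintegral_congr
  intro q
  have hnq : ‖(L⁻¹ • q : E3)‖ = ‖q‖ / L := by
    rw [norm_smul, norm_inv, Real.norm_eq_abs, abs_of_pos hL, inv_mul_eq_div]
  simp only [hnq, ite_mul, one_mul, zero_mul]
  refine if_congr ?_ rfl rfl
  rw [div_le_div_iff₀ hL (by norm_num : (0:ℝ) < 3)]
  constructor <;> intro h' <;> linarith



def LF (lam : ℝ) (k : E3) : ℝ := Real.sqrt (‖k‖ ^ 2 + lam)
def DQ (m lam : ℝ) (k₁ k₂ : E3) : ℝ := ‖k₁‖ ^ 2 + ‖k₂‖ ^ 2 + 2 / (m + 1) * ⟪k₁, k₂⟫ + lam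
def SQ (lam : ℝ) (k₁ k₂ : E3) : ℝ := ‖k₁‖ ^ 2 + ‖k₂‖ ^ 2 + lam
def gE (m lam : ℝ) (η : E3 → ℂ) (k₁ k₂ : E3) : ℝ≥0∞ :=
  ENNReal.ofReal (‖η k₁ - η k₂‖ ^ 2 / DQ m lam k₁ k₂ ^ 2)
def NE (lam : ℝ) (η : E3 → ℂ) : ℝ≥0∞ :=
  ∫⁻ k : E3, ENNReal.ofReal (‖η k‖ ^ 2) * (ENNReal.ofReal (LF lam k))⁻¹
def TE (m lam : ℝ) (η : E3 → ℂ) : ℝ≥0∞ := ∫⁻ k₁ : E3, ∫⁻ k₂ : E3, gE m lam η k₁ k₂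

section estimates

variable {m lam : ℝ} {η : E3 → ℂ}

lemma LF_pos (hlam : 0 < lam) (k : E3) : 0 < LF lam k :=
  Real.sqrt_pos.2 (by positivity)

lemma LF_sq (hlam : 0 < lam) (k : E3) : LF lam k ^ 2 = ‖k‖ ^ 2 + lam :=
  Real.sq_sqrt (by positivity)

lemma norm_le_LF (hlam : 0 < lam) (k : E3) : ‖k‖ ≤ LF lam k := by
  rw [show ‖k‖ = Real.sqrt (‖k‖ ^ 2) by rw [Real.sqrt_sq (norm_nonneg k)]]
  exact Real.sqrt_le_sqrt (by linarith)

lemma SQ_pos (hlam : 0 < lam) (k₁ k₂ : E3) : 0 < SQ lam k₁ k₂ := by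
  unfold SQ; positivity

lemma DQ_low (hm : 0 < m) (hlam : 0 < lam) (k₁ k₂ : E3) :
    m / (m + 1) * SQ lam k₁ k₂ ≤ DQ m lam k₁ k₂ := by
  have hm1 : (0:ℝ) < m + 1 := by linarith
  have habs : |⟪k₁, k₂⟫| ≤ ‖k₁‖ * ‖k₂‖ := abs_real_inner_le_norm k₁ k₂
  have h1 : -(‖k₁‖ * ‖k₂‖) ≤ ⟪k₁, k₂⟫ := neg_le_of_abs_le habs
  have hab : 2 * (‖k₁‖ * ‖k₂‖) ≤ ‖k₁‖ ^ 2 + ‖k₂‖ ^ 2 := by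
    nlinarith [sq_nonneg (‖k₁‖ - ‖k₂‖)]
  have h2 : 2 / (m + 1) * (-(‖k₁‖ * ‖k₂‖)) ≤ 2 / (m + 1) * ⟪k₁, k₂⟫ :=
    mul_le_mul_of_nonneg_left h1 (by positivity)
  have h3 : 1 / (m + 1) * (2 * (‖k₁‖ * ‖k₂‖)) ≤ 1 / (m + 1) * (‖k₁‖ ^ 2 + ‖k₂‖ ^ 2) :=
    mul_le_mul_of_nonneg_left hab (by positivity)
  have heq : 2 / (m + 1) * (-(‖k₁‖ * ‖k₂‖)) = -(1 / (m + 1) * (2 * (‖k₁‖ * ‖k₂‖))) := by ring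
  have h6 : -(1 / (m + 1) * (‖k₁‖ ^ 2 + ‖k₂‖ ^ 2)) ≤ 2 / (m + 1) * ⟪k₁, k₂⟫ := by
    linarith [h2, h3]
  have h7 : 0 ≤ 1 / (m + 1) * lam := by positivity
  have hmeq : m / (m + 1) = 1 - 1 / (m + 1) := by field_simp; ring
  unfold DQ SQ
  rw [hmeq]
  linarith [h6, h7]

lemma DQ_up (hm : 0 < m) (hlam : 0 < lam) (k₁ k₂ : E3) :
    DQ m lam k₁ k₂ ≤ 2 * SQ lam k₁ k₂ := by
  have hm1 : (0:ℝ) < m + 1 := by linarith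
  have habs : |⟪k₁, k₂⟫| ≤ ‖k₁‖ * ‖k₂‖ := abs_real_inner_le_norm k₁ k₂
  have h1 : ⟪k₁, k₂⟫ ≤ ‖k₁‖ * ‖k₂‖ := le_of_abs_le habs
  have hab : 2 * (‖k₁‖ * ‖k₂‖) ≤ ‖k₁‖ ^ 2 + ‖k₂‖ ^ 2 := by
    nlinarith [sq_nonneg (‖k₁‖ - ‖k₂‖)]
  have h2 : 2 / (m + 1) * ⟪k₁, k₂⟫ ≤ 2 / (m + 1) * (‖k₁‖ * ‖k₂‖) :=
    mul_le_mul_of_nonneg_left h1 (by positivity)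
  have h3 : 2 / (m + 1) ≤ 2 := by
    rw [div_le_iff₀ hm1]; nlinarith
  have h4 : 2 / (m + 1) * (‖k₁‖ * ‖k₂‖) ≤ ‖k₁‖ ^ 2 + ‖k₂‖ ^ 2 := by
    nlinarith [norm_nonneg k₁, norm_nonneg k₂, mul_nonneg (norm_nonneg k₁) (norm_nonneg k₂)]
  unfold DQ SQ
  nlinarith [h2, h4]

lemma DQ_pos (hm : 0 < m) (hlam : 0 < lam) (k₁ k₂ : E3) : 0 < DQ m lam k₁ k₂ :=
  lt_of_lt_of_le (mul_pos (div_pos hm (by linarith)) (SQ_pos hlam k₁ k₂))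
    (DQ_low hm hlam k₁ k₂)

lemma meas_LF : Measurable (LF lam) := by
  unfold LF; fun_prop

lemma meas_SQinv : Measurable fun p : E3 × E3 => ENNReal.ofReal ((SQ lam p.1 p.2 ^ 2)⁻¹) := by
  unfold SQ; fun_prop

lemma meas_gE (hη : Measurable η) : Measurable (Function.uncurry (gE m lam η)) := by
  unfold Function.uncurry gE DQ
  have hin : Measurable fun p : E3 × E3 => ⟪p.1, p.2⟫ := continuous_inner.measurable
  fun_prop

end estimates


section estimates2

variable {m lam : ℝ} {η : E3 → ℂ}

lemma inner0 (hlam : 0 < lam) (k₁ : E3) :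
    ∫⁻ k₂ : E3, ENNReal.ofReal ((SQ lam k₁ k₂ ^ 2)⁻¹)
      = (ENNReal.ofReal (LF lam k₁))⁻¹ * profC0 := by
  rw [← diag0 (LF_pos hlam k₁)]
  apply lintegral_congr
  intro k₂
  congr 2
  rw [LF_sq hlam]
  unfold SQ
  ring

lemma inner0' (hlam : 0 < lam) (k₂ : E3) :
    ∫⁻ k₁ : E3, ENNReal.ofReal ((SQ lam k₁ k₂ ^ 2)⁻¹)
      = (ENNReal.ofReal (LF lam k₂))⁻¹ * profC0 := by
  rw [← diag0 (LF_pos hlam k₂)]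
  apply lintegral_congr
  intro k₁
  congr 2
  rw [LF_sq hlam]
  unfold SQ
  ring

lemma inner1 (hlam : 0 < lam) (k₁ : E3) :
    ∫⁻ k₂ : E3, (if 3 * LF lam k₁ ≤ ‖k₂‖ then ENNReal.ofReal ((SQ lam k₁ k₂ ^ 2)⁻¹) else 0)
      = (ENNReal.ofReal (LF lam k₁))⁻¹ * profC1 := by
  rw [← diag1 (LF_pos hlam k₁)]
  apply lintegral_congr
  intro k₂
  refine if_congr Iff.rfl ?_ rfl
  congr 2
  rw [LF_sq hlam]
  unfold SQ
  ring

lemma inner2 (hlam : 0 < lam) (k₂ : E3) :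
    ∫⁻ k₁ : E3, (if ‖k₁‖ ≤ LF lam k₂ / 3 then ENNReal.ofReal ((SQ lam k₁ k₂ ^ 2)⁻¹) else 0)
      = (ENNReal.ofReal (LF lam k₂))⁻¹ * profC2 := by
  rw [← diag2 (LF_pos hlam k₂)]
  apply lintegral_congr
  intro k₁
  refine if_congr Iff.rfl ?_ rfl
  congr 2
  rw [LF_sq hlam]
  unfold SQ
  ring

lemma upper_bound (hm : 0 < m) (hlam : 0 < lam) (hη : Measurable η) :
    TE m lam η ≤ ENNReal.ofReal (2 / (m / (m + 1)) ^ 2)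
      * ((profC0 * NE lam η) + (profC0 * NE lam η)) := by
  have hm1 : (0:ℝ) < m + 1 := by linarith
  have hε0 : 0 < m / (m + 1) := div_pos hm hm1
  -- pointwise bound
  have hpt : ∀ k₁ k₂ : E3, gE m lam η k₁ k₂ ≤ ENNReal.ofReal (2 / (m / (m + 1)) ^ 2) *
      (ENNReal.ofReal (‖η k₁‖ ^ 2) * ENNReal.ofReal ((SQ lam k₁ k₂ ^ 2)⁻¹)
        + ENNReal.ofReal (‖η k₂‖ ^ 2) * ENNReal.ofReal ((SQ lam k₁ k₂ ^ 2)⁻¹)) := by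
    intro k₁ k₂
    rw [← ENNReal.ofReal_mul (by positivity), ← ENNReal.ofReal_mul (by positivity),
      ← ENNReal.ofReal_add (by positivity) (by positivity),
      ← ENNReal.ofReal_mul (by positivity)]
    apply ENNReal.ofReal_le_ofReal
    have hS := SQ_pos hlam k₁ k₂
    have hD := DQ_pos hm hlam k₁ k₂
    have hDS := DQ_low hm hlam k₁ k₂
    have hΔ : ‖η k₁ - η k₂‖ ^ 2 ≤ 2 * ‖η k₁‖ ^ 2 + 2 * ‖η k₂‖ ^ 2 := by
      have h := norm_sub_le (η k₁) (η k₂)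
      nlinarith [norm_nonneg (η k₁ - η k₂), norm_nonneg (η k₁), norm_nonneg (η k₂),
        sq_nonneg (‖η k₁‖ - ‖η k₂‖)]
    have hD2 : (m / (m + 1) * SQ lam k₁ k₂) ^ 2 ≤ DQ m lam k₁ k₂ ^ 2 :=
      pow_le_pow_left₀ (by positivity) hDS 2
    calc ‖η k₁ - η k₂‖ ^ 2 / DQ m lam k₁ k₂ ^ 2
        ≤ ‖η k₁ - η k₂‖ ^ 2 / (m / (m + 1) * SQ lam k₁ k₂) ^ 2 := by
          apply div_le_div_of_nonneg_left (by positivity) (by positivity) hD2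
      _ ≤ (2 * ‖η k₁‖ ^ 2 + 2 * ‖η k₂‖ ^ 2) / (m / (m + 1) * SQ lam k₁ k₂) ^ 2 :=
          (div_le_div_iff_of_pos_right (by positivity)).2 hΔ
      _ = 2 / (m / (m + 1)) ^ 2 *
          (‖η k₁‖ ^ 2 * (SQ lam k₁ k₂ ^ 2)⁻¹ + ‖η k₂‖ ^ 2 * (SQ lam k₁ k₂ ^ 2)⁻¹) := by
          field_simp
  -- measurability
  have hm1' : Measurable fun p : E3 × E3 =>
      ENNReal.ofReal (‖η p.1‖ ^ 2) * ENNReal.ofReal ((SQ lam p.1 p.2 ^ 2)⁻¹) := by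
    unfold SQ; fun_prop
  have hm2' : Measurable fun p : E3 × E3 =>
      ENNReal.ofReal (‖η p.2‖ ^ 2) * ENNReal.ofReal ((SQ lam p.1 p.2 ^ 2)⁻¹) := by
    unfold SQ; fun_prop
  calc TE m lam η
      ≤ ∫⁻ k₁ : E3, ∫⁻ k₂ : E3, ENNReal.ofReal (2 / (m / (m + 1)) ^ 2) *
          (ENNReal.ofReal (‖η k₁‖ ^ 2) * ENNReal.ofReal ((SQ lam k₁ k₂ ^ 2)⁻¹)
            + ENNReal.ofReal (‖η k₂‖ ^ 2) * ENNReal.ofReal ((SQ lam k₁ k₂ ^ 2)⁻¹)) :=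
        lintegral_mono fun k₁ => lintegral_mono fun k₂ => hpt k₁ k₂
    _ = ENNReal.ofReal (2 / (m / (m + 1)) ^ 2) *
        ((∫⁻ k₁ : E3, ∫⁻ k₂ : E3,
            ENNReal.ofReal (‖η k₁‖ ^ 2) * ENNReal.ofReal ((SQ lam k₁ k₂ ^ 2)⁻¹))
          + (∫⁻ k₁ : E3, ∫⁻ k₂ : E3,
            ENNReal.ofReal (‖η k₂‖ ^ 2) * ENNReal.ofReal ((SQ lam k₁ k₂ ^ 2)⁻¹))) := by
        rw [← lintegral_add_left (hm1'.lintegral_prod_right')]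
        rw [← lintegral_const_mul' _ _ ENNReal.ofReal_ne_top]
        apply lintegral_congr
        intro k₁
        have hmk : Measurable fun k₂ : E3 =>
            ENNReal.ofReal (‖η k₁‖ ^ 2) * ENNReal.ofReal ((SQ lam k₁ k₂ ^ 2)⁻¹) := by
          unfold SQ; fun_prop
        rw [← lintegral_add_left hmk]
        rw [← lintegral_const_mul' _ _ ENNReal.ofReal_ne_top]
    _ = ENNReal.ofReal (2 / (m / (m + 1)) ^ 2) * ((profC0 * NE lam η) + (profC0 * NE lam η)) := by
        congr 1
        congr 1
        · -- first double integral
          calc (∫⁻ k₁ : E3, ∫⁻ k₂ : E3,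
              ENNReal.ofReal (‖η k₁‖ ^ 2) * ENNReal.ofReal ((SQ lam k₁ k₂ ^ 2)⁻¹))
              = ∫⁻ k₁ : E3, ENNReal.ofReal (‖η k₁‖ ^ 2) *
                  ((ENNReal.ofReal (LF lam k₁))⁻¹ * profC0) := by
                apply lintegral_congr
                intro k₁
                rw [lintegral_const_mul' _ _ ENNReal.ofReal_ne_top, inner0 hlam k₁]
            _ = profC0 * NE lam η := by
                rw [NE, ← lintegral_const_mul' _ _ (profC0_lt_top.ne)]
                apply lintegral_congr
                intro k
                ring
        · calc (∫⁻ k₁ : E3, ∫⁻ k₂ : E3,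
              ENNReal.ofReal (‖η k₂‖ ^ 2) * ENNReal.ofReal ((SQ lam k₁ k₂ ^ 2)⁻¹))
              = ∫⁻ k₂ : E3, ∫⁻ k₁ : E3,
                  ENNReal.ofReal (‖η k₂‖ ^ 2) * ENNReal.ofReal ((SQ lam k₁ k₂ ^ 2)⁻¹) :=
                lintegral_lintegral_swap hm2'.aemeasurable
            _ = ∫⁻ k₂ : E3, ENNReal.ofReal (‖η k₂‖ ^ 2) *
                  ((ENNReal.ofReal (LF lam k₂))⁻¹ * profC0) := by
                apply lintegral_congr
                intro k₂
                rw [lintegral_const_mul' _ _ ENNReal.ofReal_ne_top, inner0' hlam k₂]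
            _ = profC0 * NE lam η := by
                rw [NE, ← lintegral_const_mul' _ _ (profC0_lt_top.ne)]
                apply lintegral_congr
                intro k
                ring

end estimates2


section estimates3

variable {m lam : ℝ} {η : E3 → ℂ}

lemma profC2_ne_top : profC2 ≠ ∞ :=
  ne_top_of_le_ne_top (ENNReal.mul_ne_top ENNReal.ofReal_ne_top ballV_ne_top) profC2_le

lemma profC1_ne_top : profC1 ≠ ∞ := ne_top_of_le_ne_top profC0_lt_top.ne profC1_le_profC0

lemma lower_bound (hm : 0 < m) (hlam : 0 < lam) (hη : Measurable η) :
    ENNReal.ofReal (1 / 2) * (profC1 * NE lam η)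
      ≤ 4 * TE m lam η + profC2 * NE lam η := by
  -- the two truncated integrands
  set q1 : E3 → E3 → ℝ≥0∞ := fun k₁ k₂ =>
    if 3 * LF lam k₁ ≤ ‖k₂‖ then
      ENNReal.ofReal (‖η k₁‖ ^ 2 / 2) * ENNReal.ofReal ((SQ lam k₁ k₂ ^ 2)⁻¹) else 0 with hq1
  set q2 : E3 → E3 → ℝ≥0∞ := fun k₁ k₂ =>
    if 3 * LF lam k₁ ≤ ‖k₂‖ then
      ENNReal.ofReal (‖η k₂‖ ^ 2) * ENNReal.ofReal ((SQ lam k₁ k₂ ^ 2)⁻¹) else 0 with hq2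
  have hq2m : Measurable (Function.uncurry q2) := by
    rw [hq2]
    unfold Function.uncurry
    apply Measurable.ite
    · apply measurableSet_le
      · exact (meas_LF.comp measurable_fst).const_mul 3
      · exact measurable_snd.norm
    · unfold SQ; fun_prop
    · exact measurable_const
  -- pointwise estimate
  have hpt : ∀ k₁ k₂ : E3, q1 k₁ k₂ ≤ 4 * gE m lam η k₁ k₂ + q2 k₁ k₂ := by
    intro k₁ k₂
    rw [hq1, hq2]
    simp only
    by_cases hc : 3 * LF lam k₁ ≤ ‖k₂‖
    · rw [if_pos hc, if_pos hc]
      have hS := SQ_pos hlam k₁ k₂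
      have hD := DQ_pos hm hlam k₁ k₂
      have hDu := DQ_up hm hlam k₁ k₂
      -- real inequality
      have hreal : ‖η k₁‖ ^ 2 / 2 * (SQ lam k₁ k₂ ^ 2)⁻¹
          ≤ 4 * (‖η k₁ - η k₂‖ ^ 2 / DQ m lam k₁ k₂ ^ 2) + ‖η k₂‖ ^ 2 * (SQ lam k₁ k₂ ^ 2)⁻¹ := by
        have hΔ : ‖η k₁‖ ^ 2 / 2 ≤ ‖η k₁ - η k₂‖ ^ 2 + ‖η k₂‖ ^ 2 := by
          have h := norm_add_le (η k₁ - η k₂) (η k₂)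
          simp only [sub_add_cancel] at h
          have h2 : ‖η k₁‖ ^ 2 ≤ (‖η k₁ - η k₂‖ + ‖η k₂‖) ^ 2 :=
            pow_le_pow_left₀ (norm_nonneg _) h 2
          nlinarith [h2, sq_nonneg (‖η k₁ - η k₂‖ - ‖η k₂‖)]
        have hd2 : DQ m lam k₁ k₂ ^ 2 ≤ 4 * SQ lam k₁ k₂ ^ 2 := by
          nlinarith [hDu, hD.le, hS.le]
        have hinv : (SQ lam k₁ k₂ ^ 2)⁻¹ ≤ 4 * (DQ m lam k₁ k₂ ^ 2)⁻¹ := by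
          rw [← div_eq_mul_inv, le_div_iff₀ (by positivity), inv_mul_eq_div,
            div_le_iff₀ (by positivity)]
          linarith
        have hstep : ‖η k₁ - η k₂‖ ^ 2 * (SQ lam k₁ k₂ ^ 2)⁻¹
            ≤ 4 * (‖η k₁ - η k₂‖ ^ 2 / DQ m lam k₁ k₂ ^ 2) := by
          calc ‖η k₁ - η k₂‖ ^ 2 * (SQ lam k₁ k₂ ^ 2)⁻¹
              ≤ ‖η k₁ - η k₂‖ ^ 2 * (4 * (DQ m lam k₁ k₂ ^ 2)⁻¹) :=
                mul_le_mul_of_nonneg_left hinv (by positivity)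
            _ = 4 * (‖η k₁ - η k₂‖ ^ 2 / DQ m lam k₁ k₂ ^ 2) := by
                rw [div_eq_mul_inv]; ring
        have := mul_le_mul_of_nonneg_right hΔ (by positivity : (0:ℝ) ≤ (SQ lam k₁ k₂ ^ 2)⁻¹)
        rw [add_mul] at this
        linarith [hstep]
      calc ENNReal.ofReal (‖η k₁‖ ^ 2 / 2) * ENNReal.ofReal ((SQ lam k₁ k₂ ^ 2)⁻¹)
          = ENNReal.ofReal (‖η k₁‖ ^ 2 / 2 * (SQ lam k₁ k₂ ^ 2)⁻¹) :=
            (ENNReal.ofReal_mul (by positivity)).symm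
        _ ≤ ENNReal.ofReal (4 * (‖η k₁ - η k₂‖ ^ 2 / DQ m lam k₁ k₂ ^ 2)
              + ‖η k₂‖ ^ 2 * (SQ lam k₁ k₂ ^ 2)⁻¹) := ENNReal.ofReal_le_ofReal hreal
        _ = ENNReal.ofReal (4 * (‖η k₁ - η k₂‖ ^ 2 / DQ m lam k₁ k₂ ^ 2))
              + ENNReal.ofReal (‖η k₂‖ ^ 2 * (SQ lam k₁ k₂ ^ 2)⁻¹) :=
            ENNReal.ofReal_add (by positivity) (by positivity)
        _ = 4 * gE m lam η k₁ k₂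
              + ENNReal.ofReal (‖η k₂‖ ^ 2) * ENNReal.ofReal ((SQ lam k₁ k₂ ^ 2)⁻¹) := by
            rw [ENNReal.ofReal_mul (by norm_num : (0:ℝ) ≤ 4),
              ENNReal.ofReal_mul (by positivity)]
            norm_num [gE]
    · rw [if_neg hc]
      exact zero_le
  -- Q1 computation
  have hQ1 : (∫⁻ k₁ : E3, ∫⁻ k₂ : E3, q1 k₁ k₂)
      = ENNReal.ofReal (1 / 2) * (profC1 * NE lam η) := by
    have hinner : ∀ k₁ : E3, (∫⁻ k₂ : E3, q1 k₁ k₂)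
        = ENNReal.ofReal (‖η k₁‖ ^ 2 / 2) * ((ENNReal.ofReal (LF lam k₁))⁻¹ * profC1) := by
      intro k₁
      rw [← inner1 hlam k₁, ← lintegral_const_mul' _ _ ENNReal.ofReal_ne_top]
      apply lintegral_congr
      intro k₂
      rw [hq1]
      simp only [mul_ite, mul_zero]
    calc (∫⁻ k₁ : E3, ∫⁻ k₂ : E3, q1 k₁ k₂)
        = ∫⁻ k₁ : E3, (ENNReal.ofReal (1 / 2) * profC1)
            * (ENNReal.ofReal (‖η k₁‖ ^ 2) * (ENNReal.ofReal (LF lam k₁))⁻¹) := by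
          apply lintegral_congr
          intro k₁
          rw [hinner k₁]
          rw [show ‖η k₁‖ ^ 2 / 2 = ‖η k₁‖ ^ 2 * (1 / 2) by ring,
            ENNReal.ofReal_mul (by positivity)]
          ring
      _ = (ENNReal.ofReal (1 / 2) * profC1) * NE lam η := by
          rw [NE, ← lintegral_const_mul' _ _
            (ENNReal.mul_ne_top ENNReal.ofReal_ne_top profC1_ne_top)]
      _ = ENNReal.ofReal (1 / 2) * (profC1 * NE lam η) := mul_assoc _ _ _
  -- Q2 bound
  have hQ2 : (∫⁻ k₁ : E3, ∫⁻ k₂ : E3, q2 k₁ k₂) ≤ profC2 * NE lam η := by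
    rw [lintegral_lintegral_swap hq2m.aemeasurable]
    calc (∫⁻ k₂ : E3, ∫⁻ k₁ : E3, q2 k₁ k₂)
        ≤ ∫⁻ k₂ : E3, ∫⁻ k₁ : E3, ENNReal.ofReal (‖η k₂‖ ^ 2) *
            (if ‖k₁‖ ≤ LF lam k₂ / 3 then ENNReal.ofReal ((SQ lam k₁ k₂ ^ 2)⁻¹) else 0) := by
          apply lintegral_mono
          intro k₂
          apply lintegral_mono
          intro k₁
          rw [hq2]
          simp only [mul_ite, mul_zero]
          by_cases hc : 3 * LF lam k₁ ≤ ‖k₂‖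
          · have hc' : ‖k₁‖ ≤ LF lam k₂ / 3 := by
              have h1 := norm_le_LF hlam k₁
              have h2 := norm_le_LF hlam k₂
              have h3 := LF_pos hlam k₁
              linarith
            rw [if_pos hc, if_pos hc']
          · rw [if_neg hc]
            exact zero_le
      _ = ∫⁻ k₂ : E3, ENNReal.ofReal (‖η k₂‖ ^ 2)
            * ((ENNReal.ofReal (LF lam k₂))⁻¹ * profC2) := by
          apply lintegral_congr
          intro k₂
          rw [lintegral_const_mul' _ _ ENNReal.ofReal_ne_top, inner2 hlam k₂]
      _ = profC2 * NE lam η := by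
          rw [NE, ← lintegral_const_mul' _ _ profC2_ne_top]
          apply lintegral_congr
          intro k
          ring
  -- combine
  have hgm := meas_gE (m := m) (lam := lam) hη
  have hsplit : (∫⁻ k₁ : E3, ∫⁻ k₂ : E3, (4 * gE m lam η k₁ k₂ + q2 k₁ k₂))
      = 4 * TE m lam η + (∫⁻ k₁ : E3, ∫⁻ k₂ : E3, q2 k₁ k₂) := by
    calc (∫⁻ k₁ : E3, ∫⁻ k₂ : E3, (4 * gE m lam η k₁ k₂ + q2 k₁ k₂))
        = ∫⁻ k₁ : E3, (4 * ∫⁻ k₂ : E3, gE m lam η k₁ k₂) + ∫⁻ k₂ : E3, q2 k₁ k₂ := by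
          apply lintegral_congr
          intro k₁
          have hg1 : Measurable fun k₂ : E3 => 4 * gE m lam η k₁ k₂ :=
            (hgm.comp measurable_prodMk_left).const_mul 4
          rw [lintegral_add_left hg1, lintegral_const_mul' _ _ (by norm_num)]
      _ = 4 * TE m lam η + (∫⁻ k₁ : E3, ∫⁻ k₂ : E3, q2 k₁ k₂) := by
          have hI : Measurable fun k₁ : E3 => ∫⁻ k₂ : E3, gE m lam η k₁ k₂ :=
            hgm.lintegral_prod_right'
          rw [lintegral_add_left (hI.const_mul 4),
            lintegral_const_mul' _ _ (by norm_num)]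
          rfl
  calc ENNReal.ofReal (1 / 2) * (profC1 * NE lam η)
      = ∫⁻ k₁ : E3, ∫⁻ k₂ : E3, q1 k₁ k₂ := hQ1.symm
    _ ≤ ∫⁻ k₁ : E3, ∫⁻ k₂ : E3, (4 * gE m lam η k₁ k₂ + q2 k₁ k₂) :=
        lintegral_mono fun k₁ => lintegral_mono fun k₂ => hpt k₁ k₂
    _ = 4 * TE m lam η + (∫⁻ k₁ : E3, ∫⁻ k₂ : E3, q2 k₁ k₂) := hsplit
    _ ≤ 4 * TE m lam η + profC2 * NE lam η := add_le_add_right hQ2 _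

end estimates3


theorem stmt16 (m : ℝ) (hm : 0 < m) :
    ∃ c₁ c₂ : ℝ, 0 < c₁ ∧ c₁ ≤ c₂ ∧
      ∀ lam : ℝ, 0 < lam →
        ∀ η : EuclideanSpace ℝ (Fin 3) → ℂ, Measurable η →
          Integrable
              (fun k : EuclideanSpace ℝ (Fin 3) =>
                ‖η k‖ ^ 2 / Real.sqrt (‖k‖ ^ 2 + lam)) →
            c₁ * (∫ k : EuclideanSpace ℝ (Fin 3),
                ‖η k‖ ^ 2 / Real.sqrt (‖k‖ ^ 2 + lam)) ≤
              (∫ k₁ : EuclideanSpace ℝ (Fin 3), ∫ k₂ : EuclideanSpace ℝ (Fin 3),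
                ‖(η k₁ - η k₂) /
                    ((‖k₁‖ ^ 2 + ‖k₂‖ ^ 2 + (2 / (m + 1)) * ⟪k₁, k₂⟫ + lam : ℝ) : ℂ)‖ ^ 2) ∧
              (∫ k₁ : EuclideanSpace ℝ (Fin 3), ∫ k₂ : EuclideanSpace ℝ (Fin 3),
                ‖(η k₁ - η k₂) /
                    ((‖k₁‖ ^ 2 + ‖k₂‖ ^ 2 + (2 / (m + 1)) * ⟪k₁, k₂⟫ + lam : ℝ) : ℂ)‖ ^ 2) ≤
                c₂ * ∫ k : EuclideanSpace ℝ (Fin 3),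
                  ‖η k‖ ^ 2 / Real.sqrt (‖k‖ ^ 2 + lam) := by
  have hm1 : (0:ℝ) < m + 1 := by linarith
  have hε0 : (0:ℝ) < m / (m + 1) := div_pos hm hm1
  set δ : ℝ := 189 / 2738 - 1 / 27 with hδdef
  have hδ0 : (0:ℝ) < δ := by norm_num [hδdef]
  have hV0 : 0 < ballV.toReal := ENNReal.toReal_pos ballV_pos.ne' ballV_ne_top
  set c₁ : ℝ := δ / 4 * ballV.toReal with hc₁def
  set c₂0 : ℝ := 4 / (m / (m + 1)) ^ 2 * profC0.toReal with hc₂def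
  have hc₁pos : 0 < c₁ := mul_pos (by linarith) hV0
  refine ⟨c₁, max c₂0 c₁, hc₁pos, le_max_right _ _, ?_⟩
  intro lam hlam η hη hInt
  -- identify NE with the Bochner integral
  have hNEeq : NE lam η = ∫⁻ k : E3, ENNReal.ofReal (‖η k‖ ^ 2 / Real.sqrt (‖k‖ ^ 2 + lam)) := by
    unfold NE LF
    apply lintegral_congr
    intro k
    rw [div_eq_mul_inv, ENNReal.ofReal_mul (by positivity),
      ENNReal.ofReal_inv_of_pos (Real.sqrt_pos.2 (by positivity))]
  have hNfin : NE lam η ≠ ∞ := by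
    have h1 := hInt.hasFiniteIntegral
    rw [hasFiniteIntegral_iff_ofReal (Filter.Eventually.of_forall fun k => by positivity)] at h1
    rw [hNEeq]
    exact h1.ne
  have hmeasR : Measurable fun k : E3 => ‖η k‖ ^ 2 / Real.sqrt (‖k‖ ^ 2 + lam) := by
    fun_prop
  have hNr : (∫ k : E3, ‖η k‖ ^ 2 / Real.sqrt (‖k‖ ^ 2 + lam)) = (NE lam η).toReal := by
    rw [integral_eq_lintegral_of_nonneg_ae (Filter.Eventually.of_forall fun k => by positivity)
      hmeasR.aestronglyMeasurable, hNEeq]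
  have hNr0 : 0 ≤ (NE lam η).toReal := ENNReal.toReal_nonneg
  -- bounds
  have hup := upper_bound (m := m) (lam := lam) (η := η) hm hlam hη
  have hTfin : TE m lam η ≠ ∞ := by
    refine ne_top_of_le_ne_top ?_ hup
    exact ENNReal.mul_ne_top ENNReal.ofReal_ne_top
      (ENNReal.add_ne_top.2 ⟨ENNReal.mul_ne_top profC0_lt_top.ne hNfin,
        ENNReal.mul_ne_top profC0_lt_top.ne hNfin⟩)
  have hlow := lower_bound (m := m) (lam := lam) (η := η) hm hlam hη
  -- key lower inequality in ℝ≥0∞ : ofReal c₁ * NE ≤ TE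
  have hkey : ENNReal.ofReal c₁ * NE lam η ≤ TE m lam η := by
    have e1 : ENNReal.ofReal (189 / 2738) * (ballV * NE lam η)
        ≤ ENNReal.ofReal (1 / 2) * (profC1 * NE lam η) := by
      have h0 : ENNReal.ofReal (189 / 2738) * ballV ≤ ENNReal.ofReal (1 / 2) * profC1 := by
        calc ENNReal.ofReal (189 / 2738) * ballV
            = ENNReal.ofReal (1 / 2) * (ENNReal.ofReal (189 / 1369) * ballV) := by
              rw [← mul_assoc, ← ENNReal.ofReal_mul (by norm_num)]
              norm_num
          _ ≤ ENNReal.ofReal (1 / 2) * profC1 := mul_le_mul_right profC1_ge _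
      calc ENNReal.ofReal (189 / 2738) * (ballV * NE lam η)
          = (ENNReal.ofReal (189 / 2738) * ballV) * NE lam η := (mul_assoc _ _ _).symm
        _ ≤ (ENNReal.ofReal (1 / 2) * profC1) * NE lam η := mul_le_mul_left h0 _
        _ = ENNReal.ofReal (1 / 2) * (profC1 * NE lam η) := mul_assoc _ _ _
    have e2 : ENNReal.ofReal (189 / 2738) * (ballV * NE lam η)
        ≤ 4 * TE m lam η + ENNReal.ofReal (1 / 27) * (ballV * NE lam η) := by
      refine (e1.trans hlow).trans (add_le_add_right ?_ _)
      calc profC2 * NE lam η ≤ (ENNReal.ofReal (1 / 27) * ballV) * NE lam η :=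
            mul_le_mul_left profC2_le _
        _ = ENNReal.ofReal (1 / 27) * (ballV * NE lam η) := mul_assoc _ _ _
    have e3 : ENNReal.ofReal δ * (ballV * NE lam η)
        + ENNReal.ofReal (1 / 27) * (ballV * NE lam η)
        ≤ 4 * TE m lam η + ENNReal.ofReal (1 / 27) * (ballV * NE lam η) := by
      rw [← add_mul, ← ENNReal.ofReal_add (by linarith) (by norm_num)]
      rw [show δ + 1 / 27 = 189 / 2738 by rw [hδdef]; ring]
      exact e2
    have hfin27 : ENNReal.ofReal (1 / 27) * (ballV * NE lam η) ≠ ∞ :=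
      ENNReal.mul_ne_top ENNReal.ofReal_ne_top (ENNReal.mul_ne_top ballV_ne_top hNfin)
    have e4 : ENNReal.ofReal δ * (ballV * NE lam η) ≤ 4 * TE m lam η :=
      (ENNReal.add_le_add_iff_right hfin27).1 e3
    have e5 : ENNReal.ofReal c₁ * NE lam η
        = ENNReal.ofReal (1 / 4) * (ENNReal.ofReal δ * (ballV * NE lam η)) := by
      conv_rhs => rw [show ballV = ENNReal.ofReal ballV.toReal from
        (ENNReal.ofReal_toReal ballV_ne_top).symm]
      rw [← mul_assoc, ← mul_assoc, ← ENNReal.ofReal_mul (by norm_num),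
        ← ENNReal.ofReal_mul (by positivity)]
      rw [show (1:ℝ) / 4 * δ * ballV.toReal = c₁ by rw [hc₁def]; ring]
    have e6 : ENNReal.ofReal (1 / 4) * (4 * TE m lam η) = TE m lam η := by
      rw [← mul_assoc, show ((4 : ℝ≥0∞)) = ENNReal.ofReal (4:ℝ) by norm_num,
        ← ENNReal.ofReal_mul (by norm_num)]
      norm_num
    rw [e5, ← e6]
    exact mul_le_mul_right e4 _
  -- identify the double Bochner integral with TE.toReal
  have hgm := meas_gE (m := m) (lam := lam) hη
  have hI : Measurable fun k₁ : E3 => ∫⁻ k₂ : E3, gE m lam η k₁ k₂ :=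
    hgm.lintegral_prod_right'
  have hnorm : ∀ k₁ k₂ : E3, ‖(η k₁ - η k₂) /
      ((‖k₁‖ ^ 2 + ‖k₂‖ ^ 2 + (2 / (m + 1)) * ⟪k₁, k₂⟫ + lam : ℝ) : ℂ)‖ ^ 2
      = ‖η k₁ - η k₂‖ ^ 2 / DQ m lam k₁ k₂ ^ 2 := by
    intro k₁ k₂
    rw [norm_div, Complex.norm_real, Real.norm_eq_abs,
      abs_of_pos (show (0:ℝ) < ‖k₁‖ ^ 2 + ‖k₂‖ ^ 2 + 2 / (m + 1) * ⟪k₁, k₂⟫ + lam from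
        DQ_pos hm hlam k₁ k₂), div_pow]
    rfl
  have hinnerm : ∀ k₁ : E3, Measurable fun k₂ : E3 => ‖(η k₁ - η k₂) /
      ((‖k₁‖ ^ 2 + ‖k₂‖ ^ 2 + (2 / (m + 1)) * ⟪k₁, k₂⟫ + lam : ℝ) : ℂ)‖ ^ 2 := by
    intro k₁
    have : Measurable fun k₂ : E3 => (⟪k₁, k₂⟫ : ℝ) :=
      (continuous_const.inner continuous_id).measurable
    fun_prop
  have hB : (∫ k₁ : E3, ∫ k₂ : E3, ‖(η k₁ - η k₂) /
      ((‖k₁‖ ^ 2 + ‖k₂‖ ^ 2 + (2 / (m + 1)) * ⟪k₁, k₂⟫ + lam : ℝ) : ℂ)‖ ^ 2)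
      = (TE m lam η).toReal := by
    have hin : ∀ k₁ : E3, (∫ k₂ : E3, ‖(η k₁ - η k₂) /
        ((‖k₁‖ ^ 2 + ‖k₂‖ ^ 2 + (2 / (m + 1)) * ⟪k₁, k₂⟫ + lam : ℝ) : ℂ)‖ ^ 2)
        = (∫⁻ k₂ : E3, gE m lam η k₁ k₂).toReal := by
      intro k₁
      rw [integral_eq_lintegral_of_nonneg_ae (Filter.Eventually.of_forall fun k₂ => by positivity)
        (hinnerm k₁).aestronglyMeasurable]
      congr 1
      apply lintegral_congr
      intro k₂
      rw [hnorm k₁ k₂]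
      rfl
    calc (∫ k₁ : E3, ∫ k₂ : E3, ‖(η k₁ - η k₂) /
        ((‖k₁‖ ^ 2 + ‖k₂‖ ^ 2 + (2 / (m + 1)) * ⟪k₁, k₂⟫ + lam : ℝ) : ℂ)‖ ^ 2)
        = ∫ k₁ : E3, (∫⁻ k₂ : E3, gE m lam η k₁ k₂).toReal := by
          exact integral_congr_ae (Filter.Eventually.of_forall hin)
      _ = (∫⁻ k₁ : E3, ENNReal.ofReal ((∫⁻ k₂ : E3, gE m lam η k₁ k₂).toReal)).toReal := by
          rw [integral_eq_lintegral_of_nonneg_ae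
            (Filter.Eventually.of_forall fun k₁ => ENNReal.toReal_nonneg)
            hI.ennreal_toReal.aestronglyMeasurable]
      _ = (TE m lam η).toReal := by
          congr 1
          have hae : ∀ᵐ k₁ : E3, (∫⁻ k₂ : E3, gE m lam η k₁ k₂) < ∞ :=
            ae_lt_top hI hTfin
          apply lintegral_congr_ae
          filter_upwards [hae] with k₁ hk₁
          rw [ENNReal.ofReal_toReal hk₁.ne]
  rw [hNr, hB]
  constructor
  · have h := ENNReal.toReal_mono hTfin hkey
    rwa [ENNReal.toReal_mul, ENNReal.toReal_ofReal hc₁pos.le] at h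
  · have hc2fin : ENNReal.ofReal (2 / (m / (m + 1)) ^ 2)
        * ((profC0 * NE lam η) + (profC0 * NE lam η)) ≠ ∞ :=
      ENNReal.mul_ne_top ENNReal.ofReal_ne_top
        (ENNReal.add_ne_top.2 ⟨ENNReal.mul_ne_top profC0_lt_top.ne hNfin,
          ENNReal.mul_ne_top profC0_lt_top.ne hNfin⟩)
    have h := ENNReal.toReal_mono hc2fin hup
    rw [ENNReal.toReal_mul, ENNReal.toReal_ofReal (by positivity)] at h
    have hadd : ((profC0 * NE lam η) + (profC0 * NE lam η)).toReal
        = 2 * (profC0.toReal * (NE lam η).toReal) := by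
      rw [ENNReal.toReal_add (ENNReal.mul_ne_top profC0_lt_top.ne hNfin)
        (ENNReal.mul_ne_top profC0_lt_top.ne hNfin), ENNReal.toReal_mul]
      ring
    rw [hadd] at h
    calc (TE m lam η).toReal ≤ 2 / (m / (m + 1)) ^ 2 * (2 * (profC0.toReal * (NE lam η).toReal)) := h
      _ = c₂0 * (NE lam η).toReal := by rw [hc₂def]; ring
      _ ≤ max c₂0 c₁ * (NE lam η).toReal :=
          mul_le_mul_of_nonneg_right (le_max_left _ _) hNr0

end
end

section
/- Let m > 0 and 0 < s < 1 satisfy the resonance equation π√(m(m+2))/(m+1) + ∫_{-1}^1 t ∫_0^∞ p^s/(p²+1+(2/(m+1))tp) dp dt = 0. Then for every R > 0, ∫_R^∞ (1/p) [ 2π² √(m(m+2))/(m+1) + 2π ∫_{-1}^1 t ∫_{R/p}^∞ q^{−s}/(q²+1+(2/(m+1))qt) dq dt ] dp = −2π ∫_1^∞ (1/p) ∫_{-1}^1 t ∫_0^{1/p} q^{−s}/(q²+1+(2/(m+1))qt) dq dt dp, and this value is independent of R. -/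
open MeasureTheory intervalIntegral Real

section Aux

variable {m s : ℝ}

/-- Lower bound on the denominator. -/
lemma aux_den (hm : 0 < m) {t q : ℝ} (ht : -1 ≤ t) (hq : 0 ≤ q) :
    m / (m + 1) * (q ^ 2 + 1) ≤ q ^ 2 + 1 + 2 / (m + 1) * q * t := by
  have hm1 : (0:ℝ) < m + 1 := by linarith
  rw [div_mul_eq_mul_div, div_le_iff₀ hm1]
  have h2 : (q ^ 2 + 1 + 2 / (m + 1) * q * t) * (m + 1)
      = (q ^ 2 + 1) * (m + 1) + 2 * (q * t) := by
    field_simp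
  rw [h2]
  nlinarith [sq_nonneg (q - 1), mul_nonneg hq (by linarith : (0:ℝ) ≤ t + 1)]

lemma aux_den_pos (hm : 0 < m) {t q : ℝ} (ht : -1 ≤ t) (hq : 0 ≤ q) :
    0 < q ^ 2 + 1 + 2 / (m + 1) * q * t := by
  have h1 : (0:ℝ) < m / (m + 1) * (q ^ 2 + 1) := by
    have : (0:ℝ) < m + 1 := by linarith
    positivity
  exact lt_of_lt_of_le h1 (aux_den hm ht hq)

/-- The dominating function is integrable on `Ioi 0`. -/
lemma aux_bound_int (hs0 : 0 < s) (hs1 : s < 1) :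
    IntegrableOn (fun q : ℝ => q ^ (-s) / (q ^ 2 + 1)) (Set.Ioi 0) := by
  have h01 : IntegrableOn (fun q : ℝ => q ^ (-s) / (q ^ 2 + 1)) (Set.Ioc 0 1) := by
    have h1 : IntegrableOn (fun q : ℝ => q ^ (-s)) (Set.Ioc 0 1) :=
      (intervalIntegrable_iff_integrableOn_Ioc_of_le zero_le_one).mp
        (intervalIntegral.intervalIntegrable_rpow' (by linarith))
    apply h1.mono' (Measurable.aestronglyMeasurable (by fun_prop))
    rw [ae_restrict_iff' measurableSet_Ioc]
    filter_upwards with q hq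
    have hq0 : (0:ℝ) ≤ q := le_of_lt hq.1
    have hnn : (0:ℝ) ≤ q ^ (-s) / (q ^ 2 + 1) :=
      div_nonneg (Real.rpow_nonneg hq0 _) (by positivity)
    rw [Real.norm_eq_abs, abs_of_nonneg hnn]
    exact div_le_self (Real.rpow_nonneg hq0 _) (by nlinarith)
  have h1i : IntegrableOn (fun q : ℝ => q ^ (-s) / (q ^ 2 + 1)) (Set.Ioi 1) := by
    have h2 : IntegrableOn (fun q : ℝ => q ^ (-2 : ℝ)) (Set.Ioi 1) :=
      integrableOn_Ioi_rpow_of_lt (by norm_num) zero_lt_one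
    apply h2.mono' (Measurable.aestronglyMeasurable (by fun_prop))
    rw [ae_restrict_iff' measurableSet_Ioi]
    filter_upwards with q hq
    have hq1 : (1:ℝ) ≤ q := le_of_lt hq
    have hq0 : (0:ℝ) ≤ q := by linarith
    have hnn : (0:ℝ) ≤ q ^ (-s) / (q ^ 2 + 1) :=
      div_nonneg (Real.rpow_nonneg hq0 _) (by positivity)
    rw [Real.norm_eq_abs, abs_of_nonneg hnn]
    have hnum : q ^ (-s) ≤ 1 :=
      Real.rpow_le_one_of_one_le_of_nonpos hq1 (by linarith)
    have h2eq : q ^ (-2:ℝ) = 1 / q ^ 2 := by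
      rw [show (-2:ℝ) = -((2:ℕ):ℝ) by norm_num, Real.rpow_neg hq0, Real.rpow_natCast, one_div]
    rw [h2eq]
    apply div_le_div₀ (by norm_num) hnum (by nlinarith) (by nlinarith)
  have h := h01.union h1i
  rwa [Set.Ioc_union_Ioi_eq_Ioi zero_le_one] at h

/-- Pointwise bound. -/
lemma aux_ptbd (hm : 0 < m) {t q : ℝ} (ht : |t| ≤ 1) (hq : 0 < q) :
    ‖q ^ (-s) / (q ^ 2 + 1 + 2 / (m + 1) * q * t)‖
      ≤ (m + 1) / m * (q ^ (-s) / (q ^ 2 + 1)) := by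
  have ht1 : -1 ≤ t := (abs_le.mp ht).1
  have hq0 : (0:ℝ) ≤ q := hq.le
  have hdpos : (0:ℝ) < m / (m + 1) * (q ^ 2 + 1) := by
    have : (0:ℝ) < m + 1 := by linarith
    positivity
  have hden := aux_den hm ht1 hq0
  have hnn : (0:ℝ) ≤ q ^ (-s) / (q ^ 2 + 1 + 2 / (m + 1) * q * t) :=
    div_nonneg (Real.rpow_nonneg hq0 _) (aux_den_pos hm ht1 hq0).le
  rw [Real.norm_eq_abs, abs_of_nonneg hnn]
  have h1 : q ^ (-s) / (q ^ 2 + 1 + 2 / (m + 1) * q * t)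
      ≤ q ^ (-s) / (m / (m + 1) * (q ^ 2 + 1)) :=
    div_le_div_of_nonneg_left (Real.rpow_nonneg hq0 _) hdpos hden
  have h2 : q ^ (-s) / (m / (m + 1) * (q ^ 2 + 1))
      = (m + 1) / m * (q ^ (-s) / (q ^ 2 + 1)) := by
    have hm0 : m ≠ 0 := hm.ne'
    have hm1 : m + 1 ≠ 0 := by positivity
    have hq2 : q ^ 2 + 1 ≠ 0 := by positivity
    field_simp
  rw [h2] at h1
  exact h1

/-- Integrability of the main integrand on `Ioi 0`. -/
lemma aux_f_int (hm : 0 < m) (hs0 : 0 < s) (hs1 : s < 1) {t : ℝ} (ht : |t| ≤ 1) :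
    IntegrableOn (fun q : ℝ => q ^ (-s) / (q ^ 2 + 1 + 2 / (m + 1) * q * t))
      (Set.Ioi 0) := by
  have hb : IntegrableOn (fun q : ℝ => (m + 1) / m * (q ^ (-s) / (q ^ 2 + 1)))
      (Set.Ioi 0) := (aux_bound_int hs0 hs1).const_mul _
  apply hb.mono' (Measurable.aestronglyMeasurable (by fun_prop))
  rw [ae_restrict_iff' measurableSet_Ioi]
  filter_upwards with q hq
  exact aux_ptbd hm ht hq

/-- Measurability of the parametrized integral. -/
lemma aux_aesm (m s : ℝ) (ν : Measure ℝ) [SFinite ν] (μ : Measure ℝ) :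
    AEStronglyMeasurable
      (fun t : ℝ => ∫ q, q ^ (-s) / (q ^ 2 + 1 + 2 / (m + 1) * q * t) ∂ν) μ := by
  exact AEStronglyMeasurable.integral_prod_right'
    (f := fun z : ℝ × ℝ => z.2 ^ (-s) / (z.2 ^ 2 + 1 + 2 / (m + 1) * z.2 * z.1))
    ((by fun_prop : Measurable
      (fun z : ℝ × ℝ => z.2 ^ (-s) / (z.2 ^ 2 + 1 + 2 / (m + 1) * z.2 * z.1))).aestronglyMeasurable)

/-- Interval integrability in the `t` variable. -/
lemma aux_ii (hm : 0 < m) (hs0 : 0 < s) (hs1 : s < 1) {S : Set ℝ}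
    (hS : MeasurableSet S) (hSsub : S ⊆ Set.Ioi 0) :
    IntervalIntegrable
      (fun t : ℝ => t * ∫ q in S, q ^ (-s) / (q ^ 2 + 1 + 2 / (m + 1) * q * t))
      volume (-1) 1 := by
  have hbint : IntegrableOn (fun q : ℝ => (m + 1) / m * (q ^ (-s) / (q ^ 2 + 1)))
      (Set.Ioi 0) := (aux_bound_int hs0 hs1).const_mul _
  set C : ℝ := ∫ q in Set.Ioi (0:ℝ), (m + 1) / m * (q ^ (-s) / (q ^ 2 + 1)) with hC
  rw [intervalIntegrable_iff_integrableOn_Ioc_of_le (by norm_num)]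
  apply Integrable.mono' (integrable_const C)
  · exact aestronglyMeasurable_id.mul (aux_aesm m s _ _)
  · rw [ae_restrict_iff' measurableSet_Ioc]
    filter_upwards with t htI
    have ht : |t| ≤ 1 := abs_le.mpr ⟨le_of_lt htI.1, htI.2⟩
    have h1 : ‖∫ q in S, q ^ (-s) / (q ^ 2 + 1 + 2 / (m + 1) * q * t)‖
        ≤ ∫ q in S, (m + 1) / m * (q ^ (-s) / (q ^ 2 + 1)) := by
      refine (MeasureTheory.norm_integral_le_integral_norm _).trans ?_
      apply integral_mono_of_nonneg (Filter.Eventually.of_forall fun q => norm_nonneg _)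
        (hbint.mono_set hSsub)
      filter_upwards [self_mem_ae_restrict hS] with q hq
      exact aux_ptbd hm ht (hSsub hq)
    have h2 : (∫ q in S, (m + 1) / m * (q ^ (-s) / (q ^ 2 + 1))) ≤ C := by
      apply setIntegral_mono_set hbint
      · filter_upwards [self_mem_ae_restrict (measurableSet_Ioi (a := (0:ℝ)))] with q hq
        simp only [Pi.zero_apply]
        have hq0' : (0:ℝ) < q := hq
        have : (0:ℝ) ≤ q ^ (-s) := Real.rpow_nonneg hq0'.le _
        have hm1 : (0:ℝ) ≤ (m + 1) / m := by positivity
        positivity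
      · exact HasSubset.Subset.eventuallyLE hSsub
    rw [norm_mul, Real.norm_eq_abs]
    calc |t| * ‖∫ q in S, q ^ (-s) / (q ^ 2 + 1 + 2 / (m + 1) * q * t)‖
        ≤ 1 * C := mul_le_mul ht (h1.trans h2) (norm_nonneg _) zero_le_one
      _ = C := one_mul C

/-- The inversion substitution `q = 1/p`. -/
lemma aux_inv (hm : 0 < m) {t : ℝ} (ht : |t| ≤ 1) :
    (∫ q in Set.Ioi (0:ℝ), q ^ (-s) / (q ^ 2 + 1 + 2 / (m + 1) * q * t))
      = ∫ p in Set.Ioi (0:ℝ), p ^ s / (p ^ 2 + 1 + 2 / (m + 1) * t * p) := by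
  have ht1 : -1 ≤ t := (abs_le.mp ht).1
  have key : (∫ q in Set.Ioi (0:ℝ), q ^ (-s) / (q ^ 2 + 1 + 2 / (m + 1) * q * t))
      = ∫ x in Set.Ioi (0:ℝ),
        (|(-1:ℝ)| * x ^ ((-1:ℝ) - 1)) •
          (fun u : ℝ => u ^ s / (u ^ 2 + 1 + 2 / (m + 1) * t * u)) (x ^ (-1:ℝ)) := by
    apply setIntegral_congr_fun measurableSet_Ioi
    intro x hx
    have hx0 : (0:ℝ) < x := hx
    have hxne : x ≠ 0 := hx0.ne'
    simp only [smul_eq_mul, abs_neg, abs_one, one_mul]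
    have e1 : ((-1:ℝ) - 1) = (-2:ℝ) := by norm_num
    rw [e1, Real.rpow_neg_one]
    have e2 : x ^ (-2:ℝ) = (x ^ 2)⁻¹ := by
      rw [show (-2:ℝ) = -((2:ℕ):ℝ) by norm_num, Real.rpow_neg hx0.le, Real.rpow_natCast]
    have e3 : (x⁻¹) ^ s = (x ^ s)⁻¹ := Real.inv_rpow hx0.le s
    have e4 : x ^ (-s) = (x ^ s)⁻¹ := Real.rpow_neg hx0.le s
    rw [e2, e3, e4]
    have keyden : x ^ 2 * ((x⁻¹) ^ 2 + 1 + 2 / (m + 1) * t * x⁻¹)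
        = x ^ 2 + 1 + 2 / (m + 1) * x * t := by
      have hm1 : m + 1 ≠ 0 := by positivity
      field_simp
      ring
    rw [← keyden, div_mul_eq_div_div_swap, div_eq_mul_inv ((x ^ s)⁻¹ / _), mul_comm]
  exact key.trans (integral_comp_rpow_Ioi (fun u : ℝ => u ^ s / (u ^ 2 + 1 + 2 / (m + 1) * t * u)) (by norm_num : (-1:ℝ) ≠ 0))

end Aux

theorem stmt19 (m s : ℝ) (hm : 0 < m) (hs0 : 0 < s) (hs1 : s < 1)
    (hres :
      Real.pi * Real.sqrt (m * (m + 2)) / (m + 1) +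
        (∫ t in (-1 : ℝ)..1,
          t * ∫ p in Set.Ioi (0 : ℝ), p ^ s / (p ^ 2 + 1 + (2 / (m + 1)) * t * p)) = 0) :
    ∀ R : ℝ, 0 < R →
      (∫ p in Set.Ioi R,
          (1 / p) *
            (2 * Real.pi ^ 2 * Real.sqrt (m * (m + 2)) / (m + 1) +
              2 * Real.pi *
                ∫ t in (-1 : ℝ)..1,
                  t * ∫ q in Set.Ioi (R / p),
                    q ^ (-s) / (q ^ 2 + 1 + (2 / (m + 1)) * q * t))) =
        -2 * Real.pi *
          ∫ p in Set.Ioi (1 : ℝ),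
            (1 / p) *
              ∫ t in (-1 : ℝ)..1,
                t * ∫ q in (0 : ℝ)..(1 / p),
                  q ^ (-s) / (q ^ 2 + 1 + (2 / (m + 1)) * q * t) := by
  intro R hR
  -- value of the `Ioi 0` double integral, from the resonance equation
  have hS : (∫ t in (-1:ℝ)..1,
      t * ∫ q in Set.Ioi (0:ℝ), q ^ (-s) / (q ^ 2 + 1 + 2 / (m + 1) * q * t))
      = -(Real.pi * Real.sqrt (m * (m + 2)) / (m + 1)) := by
    have hcongr : (∫ t in (-1:ℝ)..1,
        t * ∫ q in Set.Ioi (0:ℝ), q ^ (-s) / (q ^ 2 + 1 + 2 / (m + 1) * q * t))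
        = ∫ t in (-1:ℝ)..1,
            t * ∫ p in Set.Ioi (0:ℝ), p ^ s / (p ^ 2 + 1 + 2 / (m + 1) * t * p) := by
      apply intervalIntegral.integral_congr
      intro t htmem
      rw [Set.uIcc_of_le (by norm_num : (-1:ℝ) ≤ 1)] at htmem
      have ht : |t| ≤ 1 := abs_le.mpr ⟨htmem.1, htmem.2⟩
      simp only
      rw [aux_inv hm ht]
    rw [hcongr]
    linarith [hres]
  -- rewrite the integrand using the resonance equation
  have key : Set.EqOn
      (fun p : ℝ =>
        (1 / p) *
          (2 * Real.pi ^ 2 * Real.sqrt (m * (m + 2)) / (m + 1) +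
            2 * Real.pi *
              ∫ t in (-1:ℝ)..1,
                t * ∫ q in Set.Ioi (R / p),
                  q ^ (-s) / (q ^ 2 + 1 + (2 / (m + 1)) * q * t)))
      (fun p : ℝ =>
        (-(2 * Real.pi)) *
          ((1 / p) *
            ∫ t in (-1:ℝ)..1,
              t * ∫ q in (0:ℝ)..(R / p),
                q ^ (-s) / (q ^ 2 + 1 + (2 / (m + 1)) * q * t)))
      (Set.Ioi R) := by
    intro p hp
    have hp0 : 0 < p := lt_trans hR hp
    have hu : 0 < R / p := div_pos hR hp0
    simp only
    simp only [intervalIntegral.integral_of_le hu.le]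
    have hII : IntervalIntegrable
        (fun t : ℝ => t * ∫ q in Set.Ioi (0:ℝ), q ^ (-s) / (q ^ 2 + 1 + 2 / (m + 1) * q * t))
        volume (-1) 1 := aux_ii hm hs0 hs1 measurableSet_Ioi (subset_refl _)
    have hIG : IntervalIntegrable
        (fun t : ℝ => t * ∫ q in Set.Ioc (0:ℝ) (R / p),
          q ^ (-s) / (q ^ 2 + 1 + 2 / (m + 1) * q * t))
        volume (-1) 1 := aux_ii hm hs0 hs1 measurableSet_Ioc Set.Ioc_subset_Ioi_self
    have hsplit : Set.EqOn
        (fun t : ℝ => t * ∫ q in Set.Ioi (R / p),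
          q ^ (-s) / (q ^ 2 + 1 + 2 / (m + 1) * q * t))
        (fun t : ℝ =>
          (t * ∫ q in Set.Ioi (0:ℝ), q ^ (-s) / (q ^ 2 + 1 + 2 / (m + 1) * q * t)) -
            t * ∫ q in Set.Ioc (0:ℝ) (R / p),
              q ^ (-s) / (q ^ 2 + 1 + 2 / (m + 1) * q * t))
        (Set.uIcc (-1:ℝ) 1) := by
      intro t htmem
      rw [Set.uIcc_of_le (by norm_num : (-1:ℝ) ≤ 1)] at htmem
      have ht : |t| ≤ 1 := abs_le.mpr ⟨htmem.1, htmem.2⟩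
      have hint := aux_f_int hm hs0 hs1 ht
      have hunion : Set.Ioc (0:ℝ) (R / p) ∪ Set.Ioi (R / p) = Set.Ioi 0 :=
        Set.Ioc_union_Ioi_eq_Ioi hu.le
      have hsum := setIntegral_union (f := fun q : ℝ =>
          q ^ (-s) / (q ^ 2 + 1 + 2 / (m + 1) * q * t)) (μ := volume)
        (Set.Ioc_disjoint_Ioi le_rfl) measurableSet_Ioi
        (hint.mono_set (by rw [← hunion]; exact Set.subset_union_left))
        (hint.mono_set (by rw [← hunion]; exact Set.subset_union_right))
      rw [hunion] at hsum
      simp only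
      rw [hsum]
      ring
    rw [intervalIntegral.integral_congr hsplit, intervalIntegral.integral_sub hII hIG, hS]
    ring
  rw [setIntegral_congr_fun measurableSet_Ioi key, MeasureTheory.integral_const_mul]
  have h1 := integral_comp_mul_left_Ioi
    (fun x : ℝ => (1 / x) *
      ∫ t in (-1:ℝ)..1, t * ∫ q in (0:ℝ)..(R / x),
        q ^ (-s) / (q ^ 2 + 1 + 2 / (m + 1) * q * t)) 1 hR
  rw [mul_one, smul_eq_mul] at h1
  have h2 : (∫ x in Set.Ioi (1:ℝ),
      (fun x : ℝ => (1 / x) *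
        ∫ t in (-1:ℝ)..1, t * ∫ q in (0:ℝ)..(R / x),
          q ^ (-s) / (q ^ 2 + 1 + 2 / (m + 1) * q * t)) (R * x))
      = ∫ x in Set.Ioi (1:ℝ), R⁻¹ * ((1 / x) *
          ∫ t in (-1:ℝ)..1, t * ∫ q in (0:ℝ)..(1 / x),
            q ^ (-s) / (q ^ 2 + 1 + 2 / (m + 1) * q * t)) := by
    apply setIntegral_congr_fun measurableSet_Ioi
    intro x hx
    have hx0 : (0:ℝ) < x := lt_trans zero_lt_one hx
    simp only
    have e1 : R / (R * x) = 1 / x := by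
      field_simp
    have e2 : 1 / (R * x) = R⁻¹ * (1 / x) := by
      rw [one_div, mul_inv, one_div]
    rw [e1, e2, mul_assoc]
  rw [h2, MeasureTheory.integral_const_mul] at h1
  have h3 := mul_left_cancel₀ (inv_ne_zero hR.ne') h1
  rw [← h3]
  ring
end
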